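/- arXiv:1501.07514 — 3 statements merged into one kernel-verified Lean document; each statement's English description precedes it below -/
import Mathlib

section
/- Let (X, μ) be a finite measure space and let (g_n)_{n∈ℕ} be a sequence of measurable functions g_n : X → [0, ∞) with ∫_X g_n dμ = 1 for every n (probability densities). Then: (i) for every real p ∈ [2, ∞), the following are equivalent: (a) for every sequence (c_n) of nonnegative reals with ∑_n c_n² < ∞, the function x ↦ √(∑_n c_n² g_n(x)) belongs to L^p(X); (b) sup_n ‖√(g_n)‖_{L^p(X)} < ∞. (ii) for every real q ∈ [1, 2], the following are equivalent: (a') for every sequence (c_n) of nonnegative reals, if the function x ↦ √(∑_n c_n² g_n(x)) belongs to L^q(X) then ∑_n c_n² < ∞; (b') inf_n ‖√(g_n)‖_{L^q(X)} > 0. -/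
open MeasureTheory
open scoped ENNReal NNReal

private lemma iSup_rpow' {ι : Sort*} [Nonempty ι] {r : ℝ} (hr : 0 < r) (f : ι → ℝ≥0∞) :
    (⨆ n, f n) ^ r = ⨆ n, f n ^ r :=
  (ENNReal.orderIsoRpow r hr).map_iSup f

private lemma sum_rpow_le' {r : ℝ} (hr0 : 0 < r) (hr1 : r ≤ 1) (s : Finset ℕ) (f : ℕ → ℝ≥0∞) :
    (∑ n ∈ s, f n) ^ r ≤ ∑ n ∈ s, f n ^ r := by
  induction s using Finset.cons_induction with
  | empty => simp [ENNReal.zero_rpow_of_pos hr0]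
  | cons a s ha ih =>
    rw [Finset.sum_cons, Finset.sum_cons]
    exact le_trans (ENNReal.rpow_add_le_add_rpow _ _ hr0.le hr1) (add_le_add_right ih _)

private lemma tsum_rpow_le' {r : ℝ} (hr0 : 0 < r) (hr1 : r ≤ 1) (f : ℕ → ℝ≥0∞) :
    (∑' n, f n) ^ r ≤ ∑' n, f n ^ r := by
  rw [ENNReal.tsum_eq_iSup_sum, iSup_rpow' hr0]
  exact iSup_le fun s => le_trans (sum_rpow_le' hr0 hr1 s f) (ENNReal.sum_le_tsum s)

private lemma minkowski_sum' {X : Type*} [MeasurableSpace X] (μ : Measure X) {r : ℝ} (hr : 1 ≤ r)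
    (f : ℕ → X → ℝ≥0∞) (hf : ∀ n, Measurable (f n)) (N : ℕ) :
    (∫⁻ x, (∑ n ∈ Finset.range N, f n x) ^ r ∂μ) ^ (1/r) ≤
      ∑ n ∈ Finset.range N, (∫⁻ x, f n x ^ r ∂μ) ^ (1/r) := by
  have hr0 : 0 < r := lt_of_lt_of_le one_pos hr
  induction N with
  | zero =>
      simp [ENNReal.zero_rpow_of_pos hr0,
        ENNReal.zero_rpow_of_pos (by positivity : (0:ℝ) < 1/r), hr0]
  | succ N ih =>
      have hFmeas : Measurable fun x => ∑ n ∈ Finset.range N, f n x :=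
        Finset.measurable_sum _ fun n _ => hf n
      have key := ENNReal.lintegral_Lp_add_le (μ := μ) hFmeas.aemeasurable
        (hf N).aemeasurable hr
      calc (∫⁻ x, (∑ n ∈ Finset.range (N+1), f n x) ^ r ∂μ) ^ (1/r)
          = (∫⁻ x, ((fun y => ∑ n ∈ Finset.range N, f n y) + f N) x ^ r ∂μ) ^ (1/r) := by
            congr 1
            apply lintegral_congr
            intro x
            simp [Finset.sum_range_succ]
        _ ≤ (∫⁻ x, (∑ n ∈ Finset.range N, f n x) ^ r ∂μ) ^ (1/r)
              + (∫⁻ x, f N x ^ r ∂μ) ^ (1/r) := key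
        _ ≤ ∑ n ∈ Finset.range (N+1), (∫⁻ x, f n x ^ r ∂μ) ^ (1/r) := by
            rw [Finset.sum_range_succ]
            exact add_le_add_left ih _

private lemma eLpNorm_sqrt_eq' {X : Type*} [MeasurableSpace X] (μ : Measure X) {p : ℝ}
    (hp : 0 < p) (f : X → ℝ) (hf : ∀ x, 0 ≤ f x) :
    eLpNorm (fun x => Real.sqrt (f x)) (ENNReal.ofReal p) μ =
      (∫⁻ x, ENNReal.ofReal (f x) ^ (p/2) ∂μ) ^ (1/p) := by
  rw [eLpNorm_eq_lintegral_rpow_enorm_toReal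
      (by rw [Ne, ENNReal.ofReal_eq_zero]; exact not_le.mpr hp) ENNReal.ofReal_ne_top,
    ENNReal.toReal_ofReal hp.le]
  congr 1
  apply lintegral_congr
  intro x
  rw [Real.enorm_eq_ofReal (Real.sqrt_nonneg _), Real.sqrt_eq_rpow,
    ← ENNReal.ofReal_rpow_of_nonneg (hf x) (by norm_num : (0:ℝ) ≤ 1/2), ← ENNReal.rpow_mul,
    show (1/2*p) = p/2 by ring]

private lemma lint_ofReal_eq_one' {X : Type*} [MeasurableSpace X] (μ : Measure X) (f : X → ℝ)
    (hm : Measurable f) (h0 : ∀ x, 0 ≤ f x) (h1 : ∫ x, f x ∂μ = 1) :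
    ∫⁻ x, ENNReal.ofReal (f x) ∂μ = 1 := by
  rw [MeasureTheory.integral_eq_lintegral_of_nonneg_ae (Filter.Eventually.of_forall h0)
    hm.aestronglyMeasurable] at h1
  have hL : (∫⁻ x, ENNReal.ofReal (f x) ∂μ) ≠ ⊤ := by
    intro h
    rw [h] at h1
    simp at h1
  rw [← ENNReal.ofReal_toReal hL, h1]
  simp

private lemma exists_strictMono_seq' (P : ℕ → ℕ → Prop)
    (h : ∀ k N, ∃ n, N < n ∧ P k n) : ∃ φ : ℕ → ℕ, StrictMono φ ∧ ∀ k, P k (φ k) := by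
  choose F h1 h2 using h
  refine ⟨fun k => Nat.rec (F 0 0) (fun k ih => F (k+1) ih) k,
    strictMono_nat_of_lt_succ fun k => h1 (k+1) _, fun k => ?_⟩
  cases k with
  | zero => exact h2 0 0
  | succ k => exact h2 (k+1) _

/-- Proposition 3.2, density formulation of the Paley–Zygmund criterion:
for probability densities `g_n` on a finite measure space `X`,
(i) for `p ∈ [2,∞)`: the map `(c_n) ↦ √(∑ c_n² g_n)` sends `ℓ²` into `L^p(X)` iff
`sup_n ‖√g_n‖_{L^p} < ∞`;
(ii) for `q ∈ [1,2]`: membership of `√(∑ c_n² g_n)` in `L^q(X)` forces `∑ c_n² < ∞` iff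
`inf_n ‖√g_n‖_{L^q} > 0`. -/
theorem stmt6
    {X : Type*} [MeasurableSpace X] (μ : Measure X) [IsFiniteMeasure μ]
    (g : ℕ → X → ℝ) (hgmeas : ∀ n, Measurable (g n))
    (hgpos : ∀ n x, 0 ≤ g n x)
    (hgint : ∀ n, ∫ x, g n x ∂μ = 1) :
    (∀ p : ℝ, 2 ≤ p →
      ((∀ c : ℕ → ℝ, (∀ n, 0 ≤ c n) → Summable (fun n => (c n) ^ 2) →
          ∫⁻ x, (∑' n, ENNReal.ofReal ((c n) ^ 2 * g n x)) ^ (p/2) ∂μ < ⊤)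
        ↔ (∃ B : ℝ, ∀ n,
            eLpNorm (fun x => Real.sqrt (g n x)) (ENNReal.ofReal p) μ ≤ ENNReal.ofReal B)))
    ∧
    (∀ q : ℝ, 1 ≤ q → q ≤ 2 →
      ((∀ c : ℕ → ℝ, (∀ n, 0 ≤ c n) →
          (∫⁻ x, (∑' n, ENNReal.ofReal ((c n) ^ 2 * g n x)) ^ (q/2) ∂μ < ⊤) →
          Summable (fun n => (c n) ^ 2))
        ↔ (∃ ε : ℝ, 0 < ε ∧ ∀ n,
            ENNReal.ofReal ε ≤ eLpNorm (fun x => Real.sqrt (g n x)) (ENNReal.ofReal q) μ))) := by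
  classical
  constructor
  · -- Part (i)
    intro p hp
    have hp0 : (0:ℝ) < p := lt_of_lt_of_le two_pos hp
    have hr1 : (1:ℝ) ≤ p/2 := by linarith
    have hr0 : (0:ℝ) < p/2 := by linarith
    have heI : ∀ n, eLpNorm (fun x => Real.sqrt (g n x)) (ENNReal.ofReal p) μ
        = (∫⁻ x, ENNReal.ofReal (g n x) ^ (p/2) ∂μ) ^ (1/p) :=
      fun n => eLpNorm_sqrt_eq' μ hp0 (g n) (hgpos n)
    have hIe : ∀ n, (∫⁻ x, ENNReal.ofReal (g n x) ^ (p/2) ∂μ)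
        = (eLpNorm (fun x => Real.sqrt (g n x)) (ENNReal.ofReal p) μ) ^ p := by
      intro n
      rw [heI n, ← ENNReal.rpow_mul, one_div, inv_mul_cancel₀ hp0.ne', ENNReal.rpow_one]
    constructor
    · -- forward direction of (i)
      intro H
      by_contra hB
      push_neg at hB
      -- every individual integral is finite
      have hIfin : ∀ n, (∫⁻ x, ENNReal.ofReal (g n x) ^ (p/2) ∂μ) < ⊤ := by
        intro n
        have hc0 : ∀ m, (0:ℝ) ≤ (fun j => if j = n then (1:ℝ) else 0) m := by
          intro m
          dsimp only
          split <;> norm_num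
        have hcs : Summable (fun j => ((fun j => if j = n then (1:ℝ) else 0) j) ^ 2) := by
          apply summable_of_ne_finset_zero (s := {n})
          intro m hm
          simp only [Finset.mem_singleton] at hm
          simp [hm]
        have h := H _ hc0 hcs
        have heq : (∫⁻ x, (∑' j, ENNReal.ofReal (((fun j => if j = n then (1:ℝ) else 0) j) ^ 2
              * g j x)) ^ (p/2) ∂μ) = ∫⁻ x, ENNReal.ofReal (g n x) ^ (p/2) ∂μ := by
          apply lintegral_congr
          intro x
          congr 1
          rw [tsum_eq_single n]
          · simp
          · intro m hm
            simp [hm]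
        rwa [heq] at h
      have hefin : ∀ n, eLpNorm (fun x => Real.sqrt (g n x)) (ENNReal.ofReal p) μ < ⊤ := by
        intro n
        rw [heI n]
        exact ENNReal.rpow_lt_top_of_nonneg (by positivity) (hIfin n).ne
      have hstep : ∀ k N : ℕ, ∃ n, N < n ∧
          ENNReal.ofReal ((2:ℝ)^k) < eLpNorm (fun x => Real.sqrt (g n x)) (ENNReal.ofReal p) μ := by
        intro k N
        obtain ⟨n, hn⟩ := hB (max ((2:ℝ)^k) ((Finset.range (N+1)).sup' ⟨0, by simp⟩
          (fun m => (eLpNorm (fun x => Real.sqrt (g m x)) (ENNReal.ofReal p) μ).toReal)))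
        refine ⟨n, ?_, lt_of_le_of_lt (ENNReal.ofReal_le_ofReal (le_max_left _ _)) hn⟩
        by_contra hle
        push_neg at hle
        have h1 : (eLpNorm (fun x => Real.sqrt (g n x)) (ENNReal.ofReal p) μ).toReal
            ≤ (Finset.range (N+1)).sup' ⟨0, by simp⟩
              (fun m => (eLpNorm (fun x => Real.sqrt (g m x)) (ENNReal.ofReal p) μ).toReal) :=
          Finset.le_sup'
            (fun m => (eLpNorm (fun x => Real.sqrt (g m x)) (ENNReal.ofReal p) μ).toReal)
            (Finset.mem_range.mpr (Nat.lt_succ_of_le hle))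
        have h2 : eLpNorm (fun x => Real.sqrt (g n x)) (ENNReal.ofReal p) μ
            ≤ ENNReal.ofReal ((eLpNorm (fun x => Real.sqrt (g n x)) (ENNReal.ofReal p) μ).toReal) :=
          (ENNReal.ofReal_toReal (hefin n).ne).symm.le
        exact absurd hn (not_lt.mpr (h2.trans (ENNReal.ofReal_le_ofReal
          (h1.trans (le_max_right _ _)))))
      obtain ⟨φ, hφmono, hφ⟩ := exists_strictMono_seq' _ hstep
      set c : ℕ → ℝ := fun n => if h : ∃ k, φ k = n then Real.sqrt ((1/2 : ℝ) ^ h.choose) else 0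
        with hc
      have hc0 : ∀ n, 0 ≤ c n := by
        intro n
        rw [hc]
        dsimp only
        split
        · exact Real.sqrt_nonneg _
        · exact le_refl _
      have hcphi : ∀ k, c (φ k) = Real.sqrt ((1/2:ℝ)^k) := by
        intro k
        have hex : ∃ k', φ k' = φ k := ⟨k, rfl⟩
        rw [hc]
        dsimp only
        rw [dif_pos hex]
        congr 2
        exact hφmono.injective hex.choose_spec
      have hcsq : ∀ k, c (φ k) ^ 2 = (1/2:ℝ)^k := by
        intro k
        rw [hcphi k, Real.sq_sqrt (by positivity)]
      have hcz : ∀ n, (¬ ∃ k, φ k = n) → c n = 0 := by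
        intro n h
        rw [hc]
        exact dif_neg h
      have hsq : Summable (fun n => c n ^ 2) := by
        refine (Function.Injective.summable_iff hφmono.injective ?_).mp ?_
        · intro n hn
          have hcn : c n = 0 := hcz n (by simpa [Set.mem_range] using hn)
          simp [hcn]
        · have heq : ((fun n => c n ^ 2) ∘ φ) = fun k => (1/2:ℝ)^k := by
            funext k
            simp only [Function.comp_apply]
            exact hcsq k
          rw [heq]
          exact summable_geometric_two
      have hM := H c hc0 hsq
      set M := ∫⁻ x, (∑' n, ENNReal.ofReal (c n ^2 * g n x)) ^ (p/2) ∂μ with hMdef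
      have hlow : ∀ k : ℕ, ENNReal.ofReal ((2:ℝ)^k) ≤ M := by
        intro k
        have h2 : (∫⁻ x, ENNReal.ofReal (c (φ k)^2 * g (φ k) x) ^ (p/2) ∂μ) ≤ M :=
          lintegral_mono fun x => ENNReal.rpow_le_rpow (ENNReal.le_tsum (φ k)) hr0.le
        have h3 : (∫⁻ x, ENNReal.ofReal (c (φ k)^2 * g (φ k) x) ^ (p/2) ∂μ)
            = ENNReal.ofReal ((1/2:ℝ)^k) ^ (p/2)
              * (eLpNorm (fun x => Real.sqrt (g (φ k) x)) (ENNReal.ofReal p) μ) ^ p := by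
          calc ∫⁻ x, ENNReal.ofReal (c (φ k)^2 * g (φ k) x) ^ (p/2) ∂μ
              = ∫⁻ x, ENNReal.ofReal ((1/2:ℝ)^k) ^ (p/2)
                  * ENNReal.ofReal (g (φ k) x) ^ (p/2) ∂μ := by
                apply lintegral_congr
                intro x
                rw [hcsq k, ENNReal.ofReal_mul (by positivity),
                  ENNReal.mul_rpow_of_nonneg _ _ hr0.le]
            _ = _ := by
                rw [lintegral_const_mul' _ _
                  (ENNReal.rpow_ne_top_of_nonneg hr0.le ENNReal.ofReal_ne_top), hIe (φ k)]
        have h4 : ENNReal.ofReal ((1/2:ℝ)^k) ^ (p/2) * ENNReal.ofReal ((2:ℝ)^k) ^ p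
            ≤ ENNReal.ofReal ((1/2:ℝ)^k) ^ (p/2)
              * (eLpNorm (fun x => Real.sqrt (g (φ k) x)) (ENNReal.ofReal p) μ) ^ p :=
          mul_le_mul_right (ENNReal.rpow_le_rpow (hφ k).le hp0.le) _
        have h5 : ENNReal.ofReal ((2:ℝ)^k)
            ≤ ENNReal.ofReal ((1/2:ℝ)^k) ^ (p/2) * ENNReal.ofReal ((2:ℝ)^k) ^ p := by
          rw [ENNReal.ofReal_rpow_of_nonneg (by positivity) hr0.le,
            ENNReal.ofReal_rpow_of_nonneg (by positivity) hp0.le,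
            ← ENNReal.ofReal_mul (by positivity)]
          apply ENNReal.ofReal_le_ofReal
          have ht1 : (1:ℝ) ≤ (2:ℝ)^k := one_le_pow₀ (by norm_num)
          have htpos : (0:ℝ) < (2:ℝ)^k := by positivity
          have heq : ((1/2:ℝ)^k) ^ (p/2) * ((2:ℝ)^k) ^ p = ((2:ℝ)^k) ^ (p/2) := by
            rw [one_div, inv_pow, Real.inv_rpow htpos.le, ← Real.rpow_neg htpos.le,
              ← Real.rpow_add htpos]
            congr 1
            ring
          rw [heq]
          calc (2:ℝ)^k = ((2:ℝ)^k) ^ (1:ℝ) := (Real.rpow_one _).symm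
            _ ≤ ((2:ℝ)^k) ^ (p/2) := Real.rpow_le_rpow_of_exponent_le ht1 hr1
        calc ENNReal.ofReal ((2:ℝ)^k) ≤ _ := h5
          _ ≤ _ := h4
          _ = _ := h3.symm
          _ ≤ M := h2
      obtain ⟨m, hm⟩ := ENNReal.exists_nat_gt hM.ne
      have h1 : (m:ℝ≥0∞) ≤ M := by
        refine le_trans ?_ (hlow m)
        rw [← ENNReal.ofReal_natCast m]
        apply ENNReal.ofReal_le_ofReal
        calc (m:ℝ) ≤ ((2^m : ℕ):ℝ) := by exact_mod_cast (Nat.lt_two_pow_self (n := m)).le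
          _ = (2:ℝ)^m := by push_cast; ring
      exact absurd hm (not_lt.mpr h1)
    · -- backward direction of (i)
      rintro ⟨B, hB⟩ c hc0 hcs
      have hfmeas : ∀ n, Measurable (fun x => ENNReal.ofReal (c n ^2 * g n x)) :=
        fun n => ((hgmeas n).const_mul _).ennreal_ofReal
      have hterm : ∀ n, (∫⁻ x, ENNReal.ofReal (c n ^2 * g n x) ^ (p/2) ∂μ) ^ (1/(p/2))
          ≤ ENNReal.ofReal (c n ^2) * ENNReal.ofReal B ^ (2:ℝ) := by
        intro n
        have h1 : (∫⁻ x, ENNReal.ofReal (c n ^2 * g n x) ^ (p/2) ∂μ)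
            = ENNReal.ofReal (c n^2) ^ (p/2)
              * (eLpNorm (fun x => Real.sqrt (g n x)) (ENNReal.ofReal p) μ) ^ p := by
          calc ∫⁻ x, ENNReal.ofReal (c n ^2 * g n x) ^ (p/2) ∂μ
              = ∫⁻ x, ENNReal.ofReal (c n^2) ^ (p/2) * ENNReal.ofReal (g n x) ^ (p/2) ∂μ := by
                apply lintegral_congr
                intro x
                rw [ENNReal.ofReal_mul (sq_nonneg _), ENNReal.mul_rpow_of_nonneg _ _ hr0.le]
            _ = _ := by
                rw [lintegral_const_mul' _ _
                  (ENNReal.rpow_ne_top_of_nonneg hr0.le ENNReal.ofReal_ne_top), hIe n]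
        rw [h1, ENNReal.mul_rpow_of_nonneg _ _ (by positivity), ← ENNReal.rpow_mul,
          ← ENNReal.rpow_mul, mul_one_div, div_self hr0.ne', ENNReal.rpow_one,
          show p * (1/(p/2)) = 2 by field_simp]
        exact mul_le_mul_right (ENNReal.rpow_le_rpow (hB n) (by norm_num)) _
      have hKfin : ENNReal.ofReal (∑' n, c n ^2) * ENNReal.ofReal B ^ (2:ℝ) ≠ ⊤ :=
        (ENNReal.mul_lt_top ENNReal.ofReal_lt_top
          (ENNReal.rpow_lt_top_of_nonneg (by norm_num) ENNReal.ofReal_ne_top)).ne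
      have hpart : ∀ N, (∫⁻ x, (∑ n ∈ Finset.range N, ENNReal.ofReal (c n ^2 * g n x)) ^ (p/2) ∂μ)
          ≤ (ENNReal.ofReal (∑' n, c n ^2) * ENNReal.ofReal B ^ (2:ℝ)) ^ (p/2) := by
        intro N
        have h1 := minkowski_sum' μ hr1 _ hfmeas N
        have h2 : ∑ n ∈ Finset.range N, (∫⁻ x, ENNReal.ofReal (c n ^2 * g n x) ^ (p/2) ∂μ) ^ (1/(p/2))
            ≤ ENNReal.ofReal (∑' n, c n ^2) * ENNReal.ofReal B ^ (2:ℝ) := by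
          calc _ ≤ ∑ n ∈ Finset.range N, ENNReal.ofReal (c n^2) * ENNReal.ofReal B ^ (2:ℝ) :=
                Finset.sum_le_sum fun n _ => hterm n
            _ = (∑ n ∈ Finset.range N, ENNReal.ofReal (c n^2)) * ENNReal.ofReal B ^ (2:ℝ) := by
                rw [Finset.sum_mul]
            _ ≤ _ := by
                apply mul_le_mul_left
                rw [← ENNReal.ofReal_sum_of_nonneg (fun i _ => sq_nonneg _)]
                exact ENNReal.ofReal_le_ofReal (Summable.sum_le_tsum _ (fun i _ => sq_nonneg _) hcs)
        have h3 := h1.trans h2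
        calc (∫⁻ x, (∑ n ∈ Finset.range N, ENNReal.ofReal (c n ^2 * g n x)) ^ (p/2) ∂μ)
            = ((∫⁻ x, (∑ n ∈ Finset.range N, ENNReal.ofReal (c n ^2 * g n x)) ^ (p/2) ∂μ)
                ^ (1/(p/2))) ^ (p/2) := by
              rw [← ENNReal.rpow_mul, one_div, inv_mul_cancel₀ hr0.ne', ENNReal.rpow_one]
          _ ≤ _ := ENNReal.rpow_le_rpow h3 hr0.le
      have hmct : (∫⁻ x, (∑' n, ENNReal.ofReal (c n ^2 * g n x)) ^ (p/2) ∂μ)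
          = ⨆ N, ∫⁻ x, (∑ n ∈ Finset.range N, ENNReal.ofReal (c n ^2 * g n x)) ^ (p/2) ∂μ := by
        calc (∫⁻ x, (∑' n, ENNReal.ofReal (c n ^2 * g n x)) ^ (p/2) ∂μ)
            = ∫⁻ x, ⨆ N, (∑ n ∈ Finset.range N, ENNReal.ofReal (c n ^2 * g n x)) ^ (p/2) ∂μ := by
              apply lintegral_congr
              intro x
              rw [ENNReal.tsum_eq_iSup_nat, iSup_rpow' hr0]
          _ = _ := by
              apply lintegral_iSup
              · intro N
                exact (Finset.measurable_sum _ fun n _ => hfmeas n).pow_const _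
              · intro i j hij x
                exact ENNReal.rpow_le_rpow
                  (Finset.sum_le_sum_of_subset (Finset.range_subset_range.mpr hij)) hr0.le
      rw [hmct]
      exact lt_of_le_of_lt (iSup_le fun N => hpart N)
        (ENNReal.rpow_lt_top_of_nonneg hr0.le hKfin)
  · -- Part (ii)
    intro q hq1 hq2
    have hq0 : (0:ℝ) < q := lt_of_lt_of_le one_pos hq1
    have hr0 : (0:ℝ) < q/2 := by linarith
    have hr1 : q/2 ≤ 1 := by linarith
    have hgm : ∀ n, Measurable fun x => ENNReal.ofReal (g n x) ^ (q/2) :=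
      fun n => (hgmeas n).ennreal_ofReal.pow_const _
    have heI : ∀ n, eLpNorm (fun x => Real.sqrt (g n x)) (ENNReal.ofReal q) μ
        = (∫⁻ x, ENNReal.ofReal (g n x) ^ (q/2) ∂μ) ^ (1/q) :=
      fun n => eLpNorm_sqrt_eq' μ hq0 (g n) (hgpos n)
    have hIe : ∀ n, (∫⁻ x, ENNReal.ofReal (g n x) ^ (q/2) ∂μ)
        = (eLpNorm (fun x => Real.sqrt (g n x)) (ENNReal.ofReal q) μ) ^ q := by
      intro n
      rw [heI n, ← ENNReal.rpow_mul, one_div, inv_mul_cancel₀ hq0.ne', ENNReal.rpow_one]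
    constructor
    · -- forward direction of (ii)
      intro H
      by_contra hε
      push_neg at hε
      have hepos : ∀ n, eLpNorm (fun x => Real.sqrt (g n x)) (ENNReal.ofReal q) μ ≠ 0 := by
        intro n h0
        have hI0 : (∫⁻ x, ENNReal.ofReal (g n x) ^ (q/2) ∂μ) = 0 := by
          rw [hIe n, h0, ENNReal.zero_rpow_of_pos hq0]
        have hae : (fun x => ENNReal.ofReal (g n x) ^ (q/2)) =ᵐ[μ] 0 :=
          (lintegral_eq_zero_iff (hgm n)).mp hI0
        have hae2 : (fun x => ENNReal.ofReal (g n x)) =ᵐ[μ] 0 := by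
          filter_upwards [hae] with x hx
          simp only [Pi.zero_apply] at hx ⊢
          rcases ENNReal.rpow_eq_zero_iff.mp hx with ⟨h, _⟩ | ⟨_, hlt⟩
          · exact h
          · linarith
        have hone := lint_ofReal_eq_one' μ (g n) (hgmeas n) (hgpos n) (hgint n)
        rw [lintegral_congr_ae hae2] at hone
        simp at hone
      have hstep : ∀ k N : ℕ, ∃ n, N < n ∧
          eLpNorm (fun x => Real.sqrt (g n x)) (ENNReal.ofReal q) μ
            < ENNReal.ofReal ((1/2:ℝ)^k) := by
        intro k N
        set s : ℕ → ℝ := fun m =>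
          if eLpNorm (fun x => Real.sqrt (g m x)) (ENNReal.ofReal q) μ = ⊤ then 1
          else (eLpNorm (fun x => Real.sqrt (g m x)) (ENNReal.ofReal q) μ).toReal with hs
        have hspos : ∀ m, 0 < s m := by
          intro m
          rw [hs]
          dsimp only
          split
          · norm_num
          · exact ENNReal.toReal_pos (hepos m) (by assumption)
        have hsle : ∀ m, ENNReal.ofReal (s m)
            ≤ eLpNorm (fun x => Real.sqrt (g m x)) (ENNReal.ofReal q) μ := by
          intro m
          rw [hs]
          dsimp only
          split
          · rename_i h
            rw [h]
            exact le_top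
          · rw [ENNReal.ofReal_toReal (by assumption)]
        have hεpos : 0 < min ((1/2:ℝ)^k) ((Finset.range (N+1)).inf' ⟨0, by simp⟩ s) := by
          apply lt_min (by positivity)
          refine (Finset.lt_inf'_iff _).2 ?_
          intro m _
          exact hspos m
        obtain ⟨n, hn⟩ := hε _ hεpos
        refine ⟨n, ?_, lt_of_lt_of_le hn (ENNReal.ofReal_le_ofReal (min_le_left _ _))⟩
        by_contra hle
        push_neg at hle
        have h1 : min ((1/2:ℝ)^k) ((Finset.range (N+1)).inf' ⟨0, by simp⟩ s) ≤ s n :=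
          le_trans (min_le_right _ _)
            (Finset.inf'_le _ (Finset.mem_range.mpr (Nat.lt_succ_of_le hle)))
        exact absurd hn (not_lt.mpr (le_trans (ENNReal.ofReal_le_ofReal h1) (hsle n)))
      obtain ⟨φ, hφmono, hφ⟩ := exists_strictMono_seq' _ hstep
      set c : ℕ → ℝ := fun n => if ∃ k, φ k = n then (1:ℝ) else 0 with hc
      have hc0 : ∀ n, 0 ≤ c n := by
        intro n
        rw [hc]
        dsimp only
        split <;> norm_num
      have hcphi : ∀ k, c (φ k) = 1 := by
        intro k
        rw [hc]
        exact if_pos ⟨k, rfl⟩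
      have hfin : ∫⁻ x, (∑' n, ENNReal.ofReal (c n ^2 * g n x)) ^ (q/2) ∂μ < ⊤ := by
        have hpt : ∀ x, (∑' n, ENNReal.ofReal (c n ^2 * g n x))
            = ∑' k, ENNReal.ofReal (g (φ k) x) := by
          intro x
          rw [← Function.Injective.tsum_eq hφmono.injective
            (f := fun n => ENNReal.ofReal (c n ^2 * g n x)) ?_]
          · apply tsum_congr
            intro k
            rw [hcphi k]
            norm_num
          · intro n hn
            rw [Set.mem_range]
            by_contra hmem
            have hcn : c n = 0 := by
              rw [hc]
              exact if_neg (by simpa using hmem)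
            exact hn (by simp [Function.mem_support, hcn])
        calc ∫⁻ x, (∑' n, ENNReal.ofReal (c n ^2 * g n x)) ^ (q/2) ∂μ
            ≤ ∫⁻ x, ∑' k, ENNReal.ofReal (g (φ k) x) ^ (q/2) ∂μ := by
              apply lintegral_mono
              intro x
              dsimp only
              rw [hpt x]
              exact tsum_rpow_le' hr0 hr1 _
          _ = ∑' k, ∫⁻ x, ENNReal.ofReal (g (φ k) x) ^ (q/2) ∂μ :=
              lintegral_tsum (fun k => (hgm (φ k)).aemeasurable)
          _ ≤ ∑' k, ENNReal.ofReal ((1/2:ℝ)^k) := by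
              apply ENNReal.tsum_le_tsum
              intro k
              rw [hIe (φ k)]
              calc (eLpNorm (fun x => Real.sqrt (g (φ k) x)) (ENNReal.ofReal q) μ) ^ q
                  ≤ (ENNReal.ofReal ((1/2:ℝ)^k)) ^ q :=
                    ENNReal.rpow_le_rpow (hφ k).le hq0.le
                _ ≤ (ENNReal.ofReal ((1/2:ℝ)^k)) ^ (1:ℝ) :=
                    ENNReal.rpow_le_rpow_of_exponent_ge
                      (ENNReal.ofReal_le_one.mpr (pow_le_one₀ (by norm_num) (by norm_num))) hq1
                _ = _ := ENNReal.rpow_one _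
          _ < ⊤ := by
              rw [← ENNReal.ofReal_tsum_of_nonneg (fun k => by positivity)
                summable_geometric_two]
              exact ENNReal.ofReal_lt_top
      have hsum := H c hc0 hfin
      have h1 : Filter.Tendsto (fun k => c (φ k) ^2) Filter.atTop (nhds 0) :=
        (hsum.tendsto_atTop_zero).comp hφmono.tendsto_atTop
      have h2 : (fun k => c (φ k) ^ 2) = fun _ => (1:ℝ) := by
        funext k
        rw [hcphi k]
        norm_num
      rw [h2] at h1
      have := tendsto_nhds_unique h1 tendsto_const_nhds
      norm_num at this
    · -- backward direction of (ii)
      rintro ⟨ε, hεpos, hε⟩ c hc0 hM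
      have hε0 : (ENNReal.ofReal ε) ^ q ≠ 0 := by
        intro h
        rcases ENNReal.rpow_eq_zero_iff.mp h with ⟨h1, _⟩ | ⟨h1, _⟩
        · rw [ENNReal.ofReal_eq_zero] at h1
          linarith
        · exact ENNReal.ofReal_ne_top h1
      have hεtop : (ENNReal.ofReal ε) ^ q ≠ ⊤ :=
        ENNReal.rpow_ne_top_of_nonneg hq0.le ENNReal.ofReal_ne_top
      have hIlow : ∀ n, (ENNReal.ofReal ε) ^ q ≤ ∫⁻ x, ENNReal.ofReal (g n x) ^ (q/2) ∂μ := by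
        intro n
        rw [hIe n]
        exact ENNReal.rpow_le_rpow (hε n) hq0.le
      set M := ∫⁻ x, (∑' n, ENNReal.ofReal (c n ^2 * g n x)) ^ (q/2) ∂μ with hMdef
      set C := (M / (ENNReal.ofReal ε) ^ q) ^ (1/(q/2)) with hC
      have hCfin : C ≠ ⊤ := by
        rw [hC]
        exact (ENNReal.rpow_lt_top_of_nonneg (by positivity)
          (ENNReal.div_lt_top hM.ne hε0).ne).ne
      have hTle : ∀ N, ∑ n ∈ Finset.range N, ENNReal.ofReal (c n ^2) ≤ C := by
        intro N
        set T := ∑ n ∈ Finset.range N, ENNReal.ofReal (c n ^2) with hT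
        by_cases hT0 : T = 0
        · rw [hT0]
          exact zero_le
        have hTtop : T ≠ ⊤ := by
          rw [hT]
          exact (ENNReal.sum_lt_top.mpr (fun a _ => ENNReal.ofReal_lt_top)).ne
        have hkey : ∀ x, ∑ n ∈ Finset.range N,
            ENNReal.ofReal (c n ^2) * ENNReal.ofReal (g n x) ^ (q/2)
            ≤ T ^ (1 - q/2) * (∑' n, ENNReal.ofReal (c n ^2 * g n x)) ^ (q/2) := by
          intro x
          have hw : ∑ n ∈ Finset.range N, ENNReal.ofReal (c n^2) / T = 1 := by
            calc ∑ n ∈ Finset.range N, ENNReal.ofReal (c n^2) / T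
                = ∑ n ∈ Finset.range N, T⁻¹ * ENNReal.ofReal (c n^2) :=
                  Finset.sum_congr rfl (fun n _ => ENNReal.div_eq_inv_mul)
              _ = T⁻¹ * T := by rw [← Finset.mul_sum, ← hT]
              _ = 1 := ENNReal.inv_mul_cancel hT0 hTtop
          have hp1r : (1:ℝ) ≤ 1/(q/2) := by
            rw [le_div_iff₀ hr0]
            linarith
          have hmean := ENNReal.rpow_arith_mean_le_arith_mean_rpow (Finset.range N)
            (fun n => ENNReal.ofReal (c n^2) / T)
            (fun n => ENNReal.ofReal (g n x) ^ (q/2)) hw hp1r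
          have hz : ∀ n, ((ENNReal.ofReal (g n x) ^ (q/2)) ^ (1/(q/2)) : ℝ≥0∞)
              = ENNReal.ofReal (g n x) := by
            intro n
            rw [← ENNReal.rpow_mul, mul_one_div, div_self hr0.ne', ENNReal.rpow_one]
          have hrhs : ∑ n ∈ Finset.range N, (ENNReal.ofReal (c n^2) / T)
                * (ENNReal.ofReal (g n x) ^ (q/2)) ^ (1/(q/2))
              ≤ T⁻¹ * ∑' n, ENNReal.ofReal (c n ^2 * g n x) := by
            calc ∑ n ∈ Finset.range N, (ENNReal.ofReal (c n^2) / T)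
                  * (ENNReal.ofReal (g n x) ^ (q/2)) ^ (1/(q/2))
                = T⁻¹ * ∑ n ∈ Finset.range N, ENNReal.ofReal (c n^2 * g n x) := by
                  rw [Finset.mul_sum]
                  apply Finset.sum_congr rfl
                  intro n _
                  rw [hz n, ENNReal.ofReal_mul (sq_nonneg _), ENNReal.div_eq_inv_mul, mul_assoc]
              _ ≤ _ := mul_le_mul_right (ENNReal.sum_le_tsum _) _
          have hS := le_trans hmean hrhs
          have h2 : ∑ n ∈ Finset.range N,
              (ENNReal.ofReal (c n^2) / T) * ENNReal.ofReal (g n x) ^ (q/2)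
              ≤ (T⁻¹ * ∑' n, ENNReal.ofReal (c n ^2 * g n x)) ^ (q/2) := by
            have h := ENNReal.rpow_le_rpow hS hr0.le
            rwa [← ENNReal.rpow_mul, one_div, inv_mul_cancel₀ hr0.ne', ENNReal.rpow_one] at h
          have h3 := mul_le_mul_right h2 T
          rw [ENNReal.mul_rpow_of_nonneg _ _ hr0.le, ENNReal.inv_rpow] at h3
          calc ∑ n ∈ Finset.range N, ENNReal.ofReal (c n^2) * ENNReal.ofReal (g n x) ^ (q/2)
              = T * ∑ n ∈ Finset.range N,
                  (ENNReal.ofReal (c n^2) / T) * ENNReal.ofReal (g n x) ^ (q/2) := by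
                rw [Finset.mul_sum]
                apply Finset.sum_congr rfl
                intro n _
                rw [ENNReal.div_eq_inv_mul, ← mul_assoc, ← mul_assoc,
                  ENNReal.mul_inv_cancel hT0 hTtop, one_mul]
            _ ≤ T * ((T ^ (q/2))⁻¹ * (∑' n, ENNReal.ofReal (c n ^2 * g n x)) ^ (q/2)) := h3
            _ = T ^ (1 - q/2) * (∑' n, ENNReal.ofReal (c n ^2 * g n x)) ^ (q/2) := by
                have hTT : T * (T ^ (q/2))⁻¹ = T ^ (1 - q/2) := by
                  rw [ENNReal.rpow_sub _ _ hT0 hTtop, ENNReal.rpow_one,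
                    ENNReal.div_eq_inv_mul, mul_comm]
                rw [← mul_assoc, hTT]
        have hint : ∑ n ∈ Finset.range N,
            ENNReal.ofReal (c n^2) * (∫⁻ x, ENNReal.ofReal (g n x) ^ (q/2) ∂μ)
            ≤ T ^ (1 - q/2) * M := by
          have heq1 : (∫⁻ x, ∑ n ∈ Finset.range N,
              ENNReal.ofReal (c n^2) * ENNReal.ofReal (g n x) ^ (q/2) ∂μ)
              = ∑ n ∈ Finset.range N,
                ENNReal.ofReal (c n^2) * (∫⁻ x, ENNReal.ofReal (g n x) ^ (q/2) ∂μ) := by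
            rw [lintegral_finset_sum _ (fun n _ => (hgm n).const_mul _)]
            apply Finset.sum_congr rfl
            intro n _
            rw [lintegral_const_mul' _ _ ENNReal.ofReal_ne_top]
          calc ∑ n ∈ Finset.range N,
                ENNReal.ofReal (c n^2) * (∫⁻ x, ENNReal.ofReal (g n x) ^ (q/2) ∂μ)
              = ∫⁻ x, ∑ n ∈ Finset.range N,
                  ENNReal.ofReal (c n^2) * ENNReal.ofReal (g n x) ^ (q/2) ∂μ := heq1.symm
            _ ≤ ∫⁻ x, T ^ (1 - q/2) * (∑' n, ENNReal.ofReal (c n ^2 * g n x)) ^ (q/2) ∂μ :=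
                lintegral_mono hkey
            _ = T ^ (1 - q/2) * M := by
                rw [lintegral_const_mul' _ _
                  (ENNReal.rpow_ne_top_of_nonneg (by linarith) hTtop)]
        have hlow : (ENNReal.ofReal ε) ^ q * T ≤ T ^ (1 - q/2) * M := by
          refine le_trans ?_ hint
          rw [hT, Finset.mul_sum]
          apply Finset.sum_le_sum
          intro n _
          rw [mul_comm]
          exact mul_le_mul_right (hIlow n) _
        have hcancel : (ENNReal.ofReal ε) ^ q * T ^ (q/2) ≤ M := by
          have hrw : (ENNReal.ofReal ε) ^ q * T
              = T ^ (1 - q/2) * ((ENNReal.ofReal ε)^q * T^(q/2)) := by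
            have hTsplit : T = T^(1-q/2) * T^(q/2) := by
              rw [← ENNReal.rpow_add _ _ hT0 hTtop, show (1 - q/2) + (q/2) = 1 by ring,
                ENNReal.rpow_one]
            calc (ENNReal.ofReal ε)^q * T = (ENNReal.ofReal ε)^q * (T^(1-q/2) * T^(q/2)) := by
                  rw [← hTsplit]
              _ = T^(1-q/2) * ((ENNReal.ofReal ε)^q * T^(q/2)) := by ring
          rw [hrw] at hlow
          have hTr0 : T ^ (1 - q/2) ≠ 0 := by
            intro h
            rcases ENNReal.rpow_eq_zero_iff.mp h with ⟨h1, _⟩ | ⟨h1, _⟩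
            · exact hT0 h1
            · exact hTtop h1
          exact (ENNReal.mul_le_mul_iff_right hTr0
            (ENNReal.rpow_ne_top_of_nonneg (by linarith) hTtop)).mp hlow
        have hTr : T ^ (q/2) ≤ M / (ENNReal.ofReal ε)^q := by
          rw [ENNReal.le_div_iff_mul_le (Or.inl hε0) (Or.inl hεtop), mul_comm]
          exact hcancel
        calc T = (T ^ (q/2)) ^ (1/(q/2)) := by
              rw [← ENNReal.rpow_mul, mul_one_div, div_self hr0.ne', ENNReal.rpow_one]
          _ ≤ C := by
              rw [hC]
              exact ENNReal.rpow_le_rpow hTr (by positivity)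
      apply summable_of_sum_range_le (c := C.toReal) (fun n => sq_nonneg _)
      intro N
      have h := hTle N
      rw [← ENNReal.ofReal_sum_of_nonneg (fun i _ => sq_nonneg _)] at h
      exact (ENNReal.ofReal_le_iff_le_toReal hCfin).mp h
end

section
/- Let (X, μ) be a σ-finite measure space and let 1 ≤ p₁ < p < p₂ < ∞. For r ∈ [p₁, p₂], set θ₁(r) = (1/r − 1/p₂)/(1/p₁ − 1/p₂) and θ₂(r) = (1/p₁ − 1/r)/(1/p₁ − 1/p₂). There exists a constant C(p₁, p, p₂) ≥ 1 depending only on p₁, p, p₂ such that for every nonzero φ ∈ L^{p₁}(X) ∩ L^{p₂}(X), setting R(p) = ‖φ‖_{L^{p₁}}^{θ₁(p)} ‖φ‖_{L^{p₂}}^{θ₂(p)} / ‖φ‖_{L^{p}}, one has R(p) ≤ Q(φ, [p₁, p₂]) ≤ R(p)^{C(p₁,p,p₂)}. In particular, for a sequence (φ_n) of nonzero functions in L^{p₁}(X) ∩ L^{p₂}(X), the supremum over n of ‖φ_n‖_{L^{p₁}}^{θ₁(p)} ‖φ_n‖_{L^{p₂}}^{θ₂(p)} / ‖φ_n‖_{L^{p}}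 is finite if and only if sup_n Q(φ_n, [p₁, p₂]) is finite. -/
open MeasureTheory
open scoped ENNReal NNReal

/-- The `L^r(μ)` norm, as a real number. -/
noncomputable def lpN {X : Type*} [MeasurableSpace X] (μ : Measure X) (r : ℝ) (φ : X → ℝ) : ℝ :=
  (eLpNorm φ (ENNReal.ofReal r) μ).toReal

/-- `θ₁(r) = (1/r − 1/p₂)/(1/p₁ − 1/p₂)`. -/
noncomputable def th1 (p₁ p₂ r : ℝ) : ℝ := (1/r - 1/p₂) / (1/p₁ - 1/p₂)

/-- `θ₂(r) = (1/p₁ − 1/r)/(1/p₁ − 1/p₂)`. -/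
noncomputable def th2 (p₁ p₂ r : ℝ) : ℝ := (1/p₁ - 1/r) / (1/p₁ - 1/p₂)

/-- The interpolation defect `Q(φ, [p₁, p₂])` (Définition 14.1):
`sup_{r ∈ [p₁,p₂]} ‖φ‖_{p₁}^{θ₁(r)} ‖φ‖_{p₂}^{θ₂(r)} / ‖φ‖_r`. -/
noncomputable def interpDefect {X : Type*} [MeasurableSpace X] (μ : Measure X)
    (p₁ p₂ : ℝ) (φ : X → ℝ) : ℝ :=
  sSup {q : ℝ | ∃ r ∈ Set.Icc p₁ p₂,
    q = lpN μ p₁ φ ^ th1 p₁ p₂ r * lpN μ p₂ φ ^ th2 p₁ p₂ r / lpN μ r φ}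

/-- log of the `L^{1/s}` norm, as a function of `s = 1/r`. -/
noncomputable def Lfun {X : Type*} [MeasurableSpace X] (μ : Measure X) (φ : X → ℝ) (s : ℝ) : ℝ :=
  Real.log (lpN μ s⁻¹ φ)

/-- the (scaled) gap between the chord and the log-norm function. -/
noncomputable def hfun {X : Type*} [MeasurableSpace X] (μ : Measure X) (φ : X → ℝ)
    (a b s : ℝ) : ℝ :=
  (b - s) * Lfun μ φ a + (s - a) * Lfun μ φ b - (b - a) * Lfun μ φ s

lemma interpA {X : Type*} [MeasurableSpace X] {μ : Measure X} {φ : X → ℝ}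
    (hφ : AEStronglyMeasurable φ μ) {q₀ q₁ θ r : ℝ} (hq₀ : 0 < q₀) (hq₁ : 0 < q₁)
    (hθ0 : 0 ≤ θ) (hθ1 : θ ≤ 1) (hr0 : 0 < r) (hr : 1/r = θ/q₀ + (1-θ)/q₁) :
    eLpNorm φ (ENNReal.ofReal r) μ ≤
      eLpNorm φ (ENNReal.ofReal q₀) μ ^ θ * eLpNorm φ (ENNReal.ofReal q₁) μ ^ (1-θ) := by
  set A := θ * r / q₀ with hA
  set B := (1-θ) * r / q₁ with hB
  have hA0 : 0 ≤ A := by positivity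
  have hB0 : 0 ≤ B := div_nonneg (mul_nonneg (by linarith) hr0.le) hq₁.le
  have hAB : A + B = 1 := by
    rw [hA, hB]
    have e : θ * r / q₀ + (1-θ) * r / q₁ = r * (θ/q₀ + (1-θ)/q₁) := by ring
    rw [e, ← hr, mul_one_div, div_self hr0.ne']
  have hrr : (ENNReal.ofReal r).toReal = r := ENNReal.toReal_ofReal hr0.le
  have hq₀r : (ENNReal.ofReal q₀).toReal = q₀ := ENNReal.toReal_ofReal hq₀.le
  have hq₁r : (ENNReal.ofReal q₁).toReal = q₁ := ENNReal.toReal_ofReal hq₁.le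
  rw [eLpNorm_eq_lintegral_rpow_enorm_toReal (by simpa using hr0) ENNReal.ofReal_ne_top,
    eLpNorm_eq_lintegral_rpow_enorm_toReal (by simpa using hq₀) ENNReal.ofReal_ne_top,
    eLpNorm_eq_lintegral_rpow_enorm_toReal (by simpa using hq₁) ENNReal.ofReal_ne_top,
    hrr, hq₀r, hq₁r]
  have pointwise : ∀ x, (‖φ x‖₊ : ℝ≥0∞) ^ r
      = ((‖φ x‖₊ : ℝ≥0∞) ^ q₀) ^ A * ((‖φ x‖₊ : ℝ≥0∞) ^ q₁) ^ B := by
    intro x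
    rw [← ENNReal.rpow_mul, ← ENNReal.rpow_mul,
      ← ENNReal.rpow_add_of_nonneg _ _ (by positivity) (by positivity)]
    congr 1
    rw [hA, hB]
    field_simp
    try ring
  have key : ∫⁻ x, (‖φ x‖₊ : ℝ≥0∞) ^ r ∂μ
      ≤ (∫⁻ x, (‖φ x‖₊ : ℝ≥0∞) ^ q₀ ∂μ) ^ A * (∫⁻ x, (‖φ x‖₊ : ℝ≥0∞) ^ q₁ ∂μ) ^ B := by
    calc ∫⁻ x, (‖φ x‖₊ : ℝ≥0∞) ^ r ∂μ
        = ∫⁻ x, ((‖φ x‖₊ : ℝ≥0∞) ^ q₀) ^ A * ((‖φ x‖₊ : ℝ≥0∞) ^ q₁) ^ B ∂μ := by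
          simp_rw [pointwise]
      _ ≤ _ := ENNReal.lintegral_mul_norm_pow_le (hφ.enorm.pow_const q₀)
          (hφ.enorm.pow_const q₁) hA0 hB0 hAB
  calc (∫⁻ x, (‖φ x‖₊ : ℝ≥0∞) ^ r ∂μ) ^ (1/r)
      ≤ ((∫⁻ x, (‖φ x‖₊ : ℝ≥0∞) ^ q₀ ∂μ) ^ A * (∫⁻ x, (‖φ x‖₊ : ℝ≥0∞) ^ q₁ ∂μ) ^ B) ^ (1/r) :=
        ENNReal.rpow_le_rpow key (by positivity)
    _ = _ := by
        rw [ENNReal.mul_rpow_of_nonneg _ _ (by positivity), ← ENNReal.rpow_mul,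
          ← ENNReal.rpow_mul,
          show A * (1/r) = 1/q₀ * θ by rw [hA]; field_simp; try ring,
          show B * (1/r) = 1/q₁ * (1-θ) by rw [hB]; field_simp; try ring,
          ENNReal.rpow_mul, ENNReal.rpow_mul]
        rfl

lemma ne_zero_trans {X : Type*} [MeasurableSpace X] {μ : Measure X} {φ : X → ℝ}
    (hφ : AEStronglyMeasurable φ μ) {q r : ℝ} (hq : 0 < q) (hr : 0 < r)
    (h : eLpNorm φ (ENNReal.ofReal q) μ ≠ 0) : eLpNorm φ (ENNReal.ofReal r) μ ≠ 0 := by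
  rw [Ne, eLpNorm_eq_zero_iff hφ (by simp [ENNReal.ofReal_eq_zero, not_le, hq])] at h
  rw [Ne, eLpNorm_eq_zero_iff hφ (by simp [ENNReal.ofReal_eq_zero, not_le, hr])]
  exact h

lemma theta_prop {p₁ p₂ r : ℝ} (h1 : 0 < p₁) (h12 : p₁ < p₂) (hr : r ∈ Set.Icc p₁ p₂) :
    ∃ θ : ℝ, 0 ≤ θ ∧ θ ≤ 1 ∧ 1/r = θ/p₁ + (1-θ)/p₂ := by
  have h2 : 0 < p₂ := h1.trans h12
  have hr0 : 0 < r := lt_of_lt_of_le h1 hr.1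
  have hd : 0 < 1/p₁ - 1/p₂ := by
    have := one_div_lt_one_div_of_lt h1 h12
    linarith
  have hra : 1/p₂ ≤ 1/r := one_div_le_one_div_of_le hr0 hr.2
  have hrb : 1/r ≤ 1/p₁ := one_div_le_one_div_of_le h1 hr.1
  refine ⟨(1/r - 1/p₂)/(1/p₁ - 1/p₂), div_nonneg (by linarith) hd.le,
    (div_le_one hd).2 (by linarith), ?_⟩
  have e : (1/r - 1/p₂)/(1/p₁ - 1/p₂)/p₁ + (1-(1/r - 1/p₂)/(1/p₁ - 1/p₂))/p₂
      = 1/p₂ + ((1/r - 1/p₂)/(1/p₁ - 1/p₂)) * (1/p₁ - 1/p₂) := by ring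
  rw [e, div_mul_cancel₀ _ hd.ne']
  ring

lemma eLpNorm_fin {X : Type*} [MeasurableSpace X] {μ : Measure X} {φ : X → ℝ}
    {p₁ p₂ : ℝ} (h1 : 0 < p₁) (h12 : p₁ < p₂)
    (hm1 : MemLp φ (ENNReal.ofReal p₁) μ) (hm2 : MemLp φ (ENNReal.ofReal p₂) μ)
    {r : ℝ} (hr : r ∈ Set.Icc p₁ p₂) : eLpNorm φ (ENNReal.ofReal r) μ ≠ ⊤ := by
  obtain ⟨θ, hθ0, hθ1, hθ⟩ := theta_prop h1 h12 hr
  have hle := interpA hm1.1 h1 (h1.trans h12) hθ0 hθ1 (lt_of_lt_of_le h1 hr.1) hθ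
  exact ne_top_of_le_ne_top (ENNReal.mul_ne_top
    (ENNReal.rpow_ne_top_of_nonneg hθ0 hm1.2.ne)
    (ENNReal.rpow_ne_top_of_nonneg (by linarith) hm2.2.ne)) hle

lemma logIneq {X : Type*} [MeasurableSpace X] {μ : Measure X} {φ : X → ℝ}
    (hφ : AEStronglyMeasurable φ μ) {q₀ q₁ θ r : ℝ} (hq₀ : 0 < q₀) (hq₁ : 0 < q₁)
    (hθ0 : 0 ≤ θ) (hθ1 : θ ≤ 1) (hr0 : 0 < r) (hr : 1/r = θ/q₀ + (1-θ)/q₁)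
    (h00 : eLpNorm φ (ENNReal.ofReal q₀) μ ≠ 0) (h0T : eLpNorm φ (ENNReal.ofReal q₀) μ ≠ ⊤)
    (h10 : eLpNorm φ (ENNReal.ofReal q₁) μ ≠ 0) (h1T : eLpNorm φ (ENNReal.ofReal q₁) μ ≠ ⊤) :
    Real.log (lpN μ r φ) ≤ θ * Real.log (lpN μ q₀ φ) + (1-θ) * Real.log (lpN μ q₁ φ) := by
  have hle := interpA hφ hq₀ hq₁ hθ0 hθ1 hr0 hr
  have hRT : eLpNorm φ (ENNReal.ofReal q₀) μ ^ θ * eLpNorm φ (ENNReal.ofReal q₁) μ ^ (1-θ) ≠ ⊤ :=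
    ENNReal.mul_ne_top (ENNReal.rpow_ne_top_of_nonneg hθ0 h0T)
      (ENNReal.rpow_ne_top_of_nonneg (by linarith) h1T)
  have hrne : eLpNorm φ (ENNReal.ofReal r) μ ≠ 0 := ne_zero_trans hφ hq₀ hr0 h00
  have hrT : eLpNorm φ (ENNReal.ofReal r) μ ≠ ⊤ := ne_top_of_le_ne_top hRT hle
  have hp0 : 0 < lpN μ q₀ φ := ENNReal.toReal_pos h00 h0T
  have hp1 : 0 < lpN μ q₁ φ := ENNReal.toReal_pos h10 h1T
  have hpr : 0 < lpN μ r φ := ENNReal.toReal_pos hrne hrT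
  have hreal : lpN μ r φ ≤ lpN μ q₀ φ ^ θ * lpN μ q₁ φ ^ (1-θ) := by
    have := ENNReal.toReal_mono hRT hle
    rwa [ENNReal.toReal_mul, ← ENNReal.toReal_rpow, ← ENNReal.toReal_rpow] at this
  calc Real.log (lpN μ r φ) ≤ Real.log (lpN μ q₀ φ ^ θ * lpN μ q₁ φ ^ (1-θ)) :=
        Real.log_le_log hpr hreal
    _ = θ * Real.log (lpN μ q₀ φ) + (1-θ) * Real.log (lpN μ q₁ φ) := by
        rw [Real.log_mul (by positivity) (by positivity), Real.log_rpow hp0, Real.log_rpow hp1]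


lemma aux_e {x y s : ℝ} (h : y - x ≠ 0) :
    (y - s)/(y - x) * x + (1 - (y - s)/(y - x)) * y = s := by
  field_simp
  try ring

lemma aux_e2 {d a A B : ℝ} (h : d ≠ 0) :
    d * (a/d * A + (1 - a/d) * B) = a * A + (d - a) * B := by
  field_simp
  try ring

lemma aux_e3 {a b u La Lb Lu : ℝ} (h : b - a ≠ 0) :
    (u - a)/(b - a) * Lb + (b - u)/(b - a) * La - Lu
      = ((b - u) * La + (u - a) * Lb - (b - a) * Lu)/(b - a) := by
  field_simp
  try ring

set_option maxHeartbeats 2000000 in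
/-- Lemma 14.2: the interpolation defect is controlled by the value of the
defect at one interior exponent `p`, with a constant depending only on `p₁, p, p₂`; in
particular uniform boundedness of the one-point quotients for a sequence is equivalent to
uniform boundedness of the interpolation defects. -/
theorem stmt7 {X : Type*} [MeasurableSpace X] (μ : Measure X) [SigmaFinite μ]
    (p₁ p p₂ : ℝ) (h1 : 1 ≤ p₁) (h12 : p₁ < p) (h2p : p < p₂) :
    ∃ C : ℝ, 1 ≤ C ∧
      ((∀ φ : X → ℝ, MemLp φ (ENNReal.ofReal p₁) μ → MemLp φ (ENNReal.ofReal p₂) μ →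
          eLpNorm φ (ENNReal.ofReal p₁) μ ≠ 0 →
          (lpN μ p₁ φ ^ th1 p₁ p₂ p * lpN μ p₂ φ ^ th2 p₁ p₂ p / lpN μ p φ
              ≤ interpDefect μ p₁ p₂ φ
            ∧ interpDefect μ p₁ p₂ φ
              ≤ (lpN μ p₁ φ ^ th1 p₁ p₂ p * lpN μ p₂ φ ^ th2 p₁ p₂ p / lpN μ p φ) ^ C))
      ∧
      (∀ φs : ℕ → X → ℝ,
          (∀ n, MemLp (φs n) (ENNReal.ofReal p₁) μ) →
          (∀ n, MemLp (φs n) (ENNReal.ofReal p₂) μ) →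
          (∀ n, eLpNorm (φs n) (ENNReal.ofReal p₁) μ ≠ 0) →
          ((∃ B : ℝ, ∀ n,
              lpN μ p₁ (φs n) ^ th1 p₁ p₂ p * lpN μ p₂ (φs n) ^ th2 p₁ p₂ p / lpN μ p (φs n)
                ≤ B)
            ↔ (∃ B : ℝ, ∀ n, interpDefect μ p₁ p₂ (φs n) ≤ B)))) := by
  have hp₁ : (0:ℝ) < p₁ := lt_of_lt_of_le one_pos h1
  have hp : 0 < p := hp₁.trans h12
  have hp₂ : 0 < p₂ := hp.trans h2p
  have h1p2 : p₁ < p₂ := h12.trans h2p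
  -- inverted exponents
  have hac : p₂⁻¹ < p⁻¹ := inv_strictAnti₀ hp h2p
  have hcb : p⁻¹ < p₁⁻¹ := inv_strictAnti₀ hp₁ h12
  have hab : p₂⁻¹ < p₁⁻¹ := hac.trans hcb
  have hbc : (0:ℝ) < p₁⁻¹ - p⁻¹ := sub_pos.2 hcb
  have hca : (0:ℝ) < p⁻¹ - p₂⁻¹ := sub_pos.2 hac
  have hba : (0:ℝ) < p₁⁻¹ - p₂⁻¹ := sub_pos.2 hab
  set C₀ : ℝ := (p₁⁻¹ - p₂⁻¹)/(p₁⁻¹ - p⁻¹) + (p₁⁻¹ - p₂⁻¹)/(p⁻¹ - p₂⁻¹) with hC₀def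
  set C : ℝ := max C₀ 1 with hCdef
  have hC1 : 1 ≤ C := le_max_right _ _
  have hC0le : C₀ ≤ C := le_max_left _ _
  have hC0 : 0 ≤ C := le_trans zero_le_one hC1
  have hinv_mem : ∀ r ∈ Set.Icc p₁ p₂, r⁻¹ ∈ Set.Icc p₂⁻¹ p₁⁻¹ := by
    intro r hr
    have hr0 : 0 < r := lt_of_lt_of_le hp₁ hr.1
    exact ⟨inv_anti₀ hr0 hr.2, inv_anti₀ hp₁ hr.1⟩
  have hcmem : p⁻¹ ∈ Set.Icc p₂⁻¹ p₁⁻¹ := ⟨hac.le, hcb.le⟩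
  have main : ∀ φ : X → ℝ, MemLp φ (ENNReal.ofReal p₁) μ → MemLp φ (ENNReal.ofReal p₂) μ →
      eLpNorm φ (ENNReal.ofReal p₁) μ ≠ 0 →
      (1 ≤ lpN μ p₁ φ ^ th1 p₁ p₂ p * lpN μ p₂ φ ^ th2 p₁ p₂ p / lpN μ p φ
        ∧ lpN μ p₁ φ ^ th1 p₁ p₂ p * lpN μ p₂ φ ^ th2 p₁ p₂ p / lpN μ p φ
            ≤ interpDefect μ p₁ p₂ φ
        ∧ interpDefect μ p₁ p₂ φ
            ≤ (lpN μ p₁ φ ^ th1 p₁ p₂ p * lpN μ p₂ φ ^ th2 p₁ p₂ p / lpN μ p φ) ^ C) := by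
    intro φ hm1 hm2 hN0
    have hφ := hm1.1
    have hprop : ∀ r ∈ Set.Icc p₁ p₂,
        eLpNorm φ (ENNReal.ofReal r) μ ≠ 0 ∧ eLpNorm φ (ENNReal.ofReal r) μ ≠ ⊤ := fun r hr =>
      ⟨ne_zero_trans hφ hp₁ (lt_of_lt_of_le hp₁ hr.1) hN0, eLpNorm_fin hp₁ h1p2 hm1 hm2 hr⟩
    have hpos : ∀ r ∈ Set.Icc p₁ p₂, 0 < lpN μ r φ := fun r hr =>
      ENNReal.toReal_pos (hprop r hr).1 (hprop r hr).2
    -- convexity of L in s = 1/r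
    have hconv : ∀ s ∈ Set.Icc p₂⁻¹ p₁⁻¹, ∀ t ∈ Set.Icc p₂⁻¹ p₁⁻¹, ∀ θ : ℝ, 0 ≤ θ → θ ≤ 1 →
        Lfun μ φ (θ*s + (1-θ)*t) ≤ θ * Lfun μ φ s + (1-θ) * Lfun μ φ t := by
      intro s hs t ht θ hθ0 hθ1
      have ha0 : (0:ℝ) < p₂⁻¹ := by positivity
      have hs0 : 0 < s := lt_of_lt_of_le ha0 hs.1
      have ht0 : 0 < t := lt_of_lt_of_le ha0 ht.1
      have hcombo1 : p₂⁻¹ ≤ θ*s + (1-θ)*t := by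
        nlinarith [mul_nonneg hθ0 (sub_nonneg.2 hs.1),
          mul_nonneg (by linarith : (0:ℝ) ≤ 1-θ) (sub_nonneg.2 ht.1)]
      have hcombo2 : θ*s + (1-θ)*t ≤ p₁⁻¹ := by
        nlinarith [mul_nonneg hθ0 (sub_nonneg.2 hs.2),
          mul_nonneg (by linarith : (0:ℝ) ≤ 1-θ) (sub_nonneg.2 ht.2)]
      have hst : 0 < θ*s + (1-θ)*t := lt_of_lt_of_le ha0 hcombo1
      have hmem_s : s⁻¹ ∈ Set.Icc p₁ p₂ := by
        constructor
        · rw [← inv_inv p₁]; exact inv_anti₀ hs0 hs.2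
        · rw [← inv_inv p₂]; exact inv_anti₀ ha0 hs.1
      have hmem_t : t⁻¹ ∈ Set.Icc p₁ p₂ := by
        constructor
        · rw [← inv_inv p₁]; exact inv_anti₀ ht0 ht.2
        · rw [← inv_inv p₂]; exact inv_anti₀ ha0 ht.1
      simp only [Lfun]
      exact logIneq hφ (inv_pos.2 hs0) (inv_pos.2 ht0) hθ0 hθ1 (inv_pos.2 hst)
        (by rw [one_div, inv_inv]; simp only [div_eq_mul_inv, inv_inv])
        (hprop _ hmem_s).1 (hprop _ hmem_s).2 (hprop _ hmem_t).1 (hprop _ hmem_t).2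
    have hba' : p₁⁻¹ - p₂⁻¹ ≠ 0 := hba.ne'
    -- nonnegativity of hfun on the interval
    have claim1 : ∀ s ∈ Set.Icc p₂⁻¹ p₁⁻¹, 0 ≤ hfun μ φ p₂⁻¹ p₁⁻¹ s := by
      intro s hs
      have hθ0 : 0 ≤ (p₁⁻¹ - s)/(p₁⁻¹ - p₂⁻¹) := div_nonneg (by linarith [hs.2]) hba.le
      have hθ1 : (p₁⁻¹ - s)/(p₁⁻¹ - p₂⁻¹) ≤ 1 := (div_le_one hba).2 (by linarith [hs.1])
      have h2 := hconv p₂⁻¹ ⟨le_refl _, hab.le⟩ p₁⁻¹ ⟨hab.le, le_refl _⟩ _ hθ0 hθ1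
      have e : (p₁⁻¹ - s)/(p₁⁻¹ - p₂⁻¹)*p₂⁻¹ + (1-(p₁⁻¹ - s)/(p₁⁻¹ - p₂⁻¹))*p₁⁻¹ = s :=
        aux_e hba'
      rw [e] at h2
      have h3 := mul_le_mul_of_nonneg_left h2 hba.le
      have e2 : (p₁⁻¹ - p₂⁻¹)*((p₁⁻¹ - s)/(p₁⁻¹ - p₂⁻¹) * Lfun μ φ p₂⁻¹
          + (1-(p₁⁻¹ - s)/(p₁⁻¹ - p₂⁻¹)) * Lfun μ φ p₁⁻¹)
          = (p₁⁻¹ - s) * Lfun μ φ p₂⁻¹ + (s - p₂⁻¹) * Lfun μ φ p₁⁻¹ := by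
        rw [aux_e2 hba']
        ring
      rw [e2] at h3
      simp only [hfun]
      linarith
    have hc0 : 0 ≤ hfun μ φ p₂⁻¹ p₁⁻¹ p⁻¹ := claim1 _ hcmem
    -- hfun s ≤ C₀ * hfun c
    have claim2 : ∀ s ∈ Set.Icc p₂⁻¹ p₁⁻¹,
        hfun μ φ p₂⁻¹ p₁⁻¹ s ≤ C₀ * hfun μ φ p₂⁻¹ p₁⁻¹ p⁻¹ := by
      intro s hs
      rcases le_total s p⁻¹ with hsc | hcs
      · have hbs : 0 < p₁⁻¹ - s := sub_pos.2 (lt_of_le_of_lt hsc hcb)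
        have hθ0 : 0 ≤ (p₁⁻¹ - p⁻¹)/(p₁⁻¹ - s) := div_nonneg hbc.le hbs.le
        have hθ1 : (p₁⁻¹ - p⁻¹)/(p₁⁻¹ - s) ≤ 1 := (div_le_one hbs).2 (by linarith)
        have h2 := hconv s hs p₁⁻¹ ⟨hab.le, le_refl _⟩ _ hθ0 hθ1
        have e : (p₁⁻¹ - p⁻¹)/(p₁⁻¹ - s)*s + (1-(p₁⁻¹ - p⁻¹)/(p₁⁻¹ - s))*p₁⁻¹ = p⁻¹ :=
          aux_e hbs.ne'
        rw [e] at h2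
        have h3 := mul_le_mul_of_nonneg_left h2 hbs.le
        have e2 : (p₁⁻¹ - s)*((p₁⁻¹ - p⁻¹)/(p₁⁻¹ - s) * Lfun μ φ s
            + (1-(p₁⁻¹ - p⁻¹)/(p₁⁻¹ - s)) * Lfun μ φ p₁⁻¹)
            = (p₁⁻¹ - p⁻¹) * Lfun μ φ s + (p⁻¹ - s) * Lfun μ φ p₁⁻¹ := by
          rw [aux_e2 hbs.ne']
          ring
        rw [e2] at h3
        have h4 := mul_le_mul_of_nonneg_left h3 hba.le
        have T : (p₁⁻¹ - p⁻¹) * hfun μ φ p₂⁻¹ p₁⁻¹ s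
            ≤ (p₁⁻¹ - s) * hfun μ φ p₂⁻¹ p₁⁻¹ p⁻¹ := by
          simp only [hfun, Lfun] at h4 ⊢
          linarith [h4]
        have T2 : (p₁⁻¹ - s) * hfun μ φ p₂⁻¹ p₁⁻¹ p⁻¹
            ≤ (p₁⁻¹ - p₂⁻¹) * hfun μ φ p₂⁻¹ p₁⁻¹ p⁻¹ :=
          mul_le_mul_of_nonneg_right (by linarith [hs.1]) hc0
        have T4 : 0 ≤ (p₁⁻¹ - p₂⁻¹)/(p⁻¹ - p₂⁻¹) * hfun μ φ p₂⁻¹ p₁⁻¹ p⁻¹ :=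
          mul_nonneg (div_nonneg hba.le hca.le) hc0
        have T3 : hfun μ φ p₂⁻¹ p₁⁻¹ s
            ≤ (p₁⁻¹ - p₂⁻¹)/(p₁⁻¹ - p⁻¹) * hfun μ φ p₂⁻¹ p₁⁻¹ p⁻¹ := by
          rw [div_mul_eq_mul_div, le_div_iff₀ hbc]
          linarith [T, T2]
        rw [hC₀def]
        linarith [T3, T4]
      · have hsa : 0 < s - p₂⁻¹ := sub_pos.2 (lt_of_lt_of_le hac hcs)
        have hθ0 : 0 ≤ (s - p⁻¹)/(s - p₂⁻¹) := div_nonneg (by linarith) hsa.le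
        have hθ1 : (s - p⁻¹)/(s - p₂⁻¹) ≤ 1 := (div_le_one hsa).2 (by linarith)
        have h2 := hconv p₂⁻¹ ⟨le_refl _, hab.le⟩ s hs _ hθ0 hθ1
        have e : (s - p⁻¹)/(s - p₂⁻¹)*p₂⁻¹ + (1-(s - p⁻¹)/(s - p₂⁻¹))*s = p⁻¹ :=
          aux_e hsa.ne'
        rw [e] at h2
        have h3 := mul_le_mul_of_nonneg_left h2 hsa.le
        have e2 : (s - p₂⁻¹)*((s - p⁻¹)/(s - p₂⁻¹) * Lfun μ φ p₂⁻¹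
            + (1-(s - p⁻¹)/(s - p₂⁻¹)) * Lfun μ φ s)
            = (s - p⁻¹) * Lfun μ φ p₂⁻¹ + (p⁻¹ - p₂⁻¹) * Lfun μ φ s := by
          rw [aux_e2 hsa.ne']
          ring
        rw [e2] at h3
        have h4 := mul_le_mul_of_nonneg_left h3 hba.le
        have T : (p⁻¹ - p₂⁻¹) * hfun μ φ p₂⁻¹ p₁⁻¹ s
            ≤ (s - p₂⁻¹) * hfun μ φ p₂⁻¹ p₁⁻¹ p⁻¹ := by
          simp only [hfun, Lfun] at h4 ⊢
          linarith [h4]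
        have T2 : (s - p₂⁻¹) * hfun μ φ p₂⁻¹ p₁⁻¹ p⁻¹
            ≤ (p₁⁻¹ - p₂⁻¹) * hfun μ φ p₂⁻¹ p₁⁻¹ p⁻¹ :=
          mul_le_mul_of_nonneg_right (by linarith [hs.2]) hc0
        have T4 : 0 ≤ (p₁⁻¹ - p₂⁻¹)/(p₁⁻¹ - p⁻¹) * hfun μ φ p₂⁻¹ p₁⁻¹ p⁻¹ :=
          mul_nonneg (div_nonneg hba.le hbc.le) hc0
        have T3 : hfun μ φ p₂⁻¹ p₁⁻¹ s
            ≤ (p₁⁻¹ - p₂⁻¹)/(p⁻¹ - p₂⁻¹) * hfun μ φ p₂⁻¹ p₁⁻¹ p⁻¹ := by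
          rw [div_mul_eq_mul_div, le_div_iff₀ hca]
          linarith [T, T2]
        rw [hC₀def]
        linarith [T3, T4]
    -- F r = exp (hfun r⁻¹ / (b-a))
    have hFexp : ∀ r ∈ Set.Icc p₁ p₂,
        lpN μ p₁ φ ^ th1 p₁ p₂ r * lpN μ p₂ φ ^ th2 p₁ p₂ r / lpN μ r φ
          = Real.exp (hfun μ φ p₂⁻¹ p₁⁻¹ r⁻¹ / (p₁⁻¹ - p₂⁻¹)) := by
      intro r hr
      have hr0 : 0 < r := lt_of_lt_of_le hp₁ hr.1
      have hP1 : 0 < lpN μ p₁ φ := hpos p₁ ⟨le_refl _, h1p2.le⟩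
      have hP2 : 0 < lpN μ p₂ φ := hpos p₂ ⟨h1p2.le, le_refl _⟩
      have hPr : 0 < lpN μ r φ := hpos r hr
      have hFpos : 0 < lpN μ p₁ φ ^ th1 p₁ p₂ r * lpN μ p₂ φ ^ th2 p₁ p₂ r / lpN μ r φ := by
        positivity
      rw [← Real.exp_log hFpos]
      congr 1
      rw [Real.log_div (by positivity) hPr.ne', Real.log_mul (by positivity) (by positivity),
        Real.log_rpow hP1, Real.log_rpow hP2]
      simp only [hfun, Lfun, inv_inv, th1, th2, one_div]
      exact aux_e3 hba'
    -- value at p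
    have hFp : lpN μ p₁ φ ^ th1 p₁ p₂ p * lpN μ p₂ φ ^ th2 p₁ p₂ p / lpN μ p φ
        = Real.exp (hfun μ φ p₂⁻¹ p₁⁻¹ p⁻¹ / (p₁⁻¹ - p₂⁻¹)) :=
      hFexp p ⟨h12.le, h2p.le⟩
    have hF1 : 1 ≤ lpN μ p₁ φ ^ th1 p₁ p₂ p * lpN μ p₂ φ ^ th2 p₁ p₂ p / lpN μ p φ := by
      rw [hFp]
      exact Real.one_le_exp (div_nonneg hc0 hba.le)
    -- uniform bound over r
    have hupper : ∀ r ∈ Set.Icc p₁ p₂,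
        lpN μ p₁ φ ^ th1 p₁ p₂ r * lpN μ p₂ φ ^ th2 p₁ p₂ r / lpN μ r φ
          ≤ (lpN μ p₁ φ ^ th1 p₁ p₂ p * lpN μ p₂ φ ^ th2 p₁ p₂ p / lpN μ p φ) ^ C := by
      intro r hr
      rw [hFexp r hr, hFp, ← Real.exp_mul]
      apply Real.exp_le_exp.2
      have h2 := claim2 r⁻¹ (hinv_mem r hr)
      have hCc : C₀ * hfun μ φ p₂⁻¹ p₁⁻¹ p⁻¹ ≤ C * hfun μ φ p₂⁻¹ p₁⁻¹ p⁻¹ :=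
        mul_le_mul_of_nonneg_right hC0le hc0
      rw [div_mul_eq_mul_div, div_le_div_iff₀ hba hba]
      linarith [mul_le_mul_of_nonneg_right (le_trans h2 hCc) hba.le]
    -- sSup manipulations
    have hSmem : lpN μ p₁ φ ^ th1 p₁ p₂ p * lpN μ p₂ φ ^ th2 p₁ p₂ p / lpN μ p φ
        ∈ {q : ℝ | ∃ r ∈ Set.Icc p₁ p₂,
            q = lpN μ p₁ φ ^ th1 p₁ p₂ r * lpN μ p₂ φ ^ th2 p₁ p₂ r / lpN μ r φ} :=
      ⟨p, ⟨h12.le, h2p.le⟩, rfl⟩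
    have hSbdd : BddAbove {q : ℝ | ∃ r ∈ Set.Icc p₁ p₂,
        q = lpN μ p₁ φ ^ th1 p₁ p₂ r * lpN μ p₂ φ ^ th2 p₁ p₂ r / lpN μ r φ} := by
      refine ⟨(lpN μ p₁ φ ^ th1 p₁ p₂ p * lpN μ p₂ φ ^ th2 p₁ p₂ p / lpN μ p φ) ^ C, ?_⟩
      rintro x ⟨r, hr, rfl⟩
      exact hupper r hr
    refine ⟨hF1, le_csSup hSbdd hSmem, ?_⟩
    apply Real.sSup_le
    · rintro x ⟨r, hr, rfl⟩
      exact hupper r hr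
    · exact Real.rpow_nonneg (le_trans zero_le_one hF1) C
  refine ⟨C, hC1, fun φ hm1 hm2 hN0 => ⟨(main φ hm1 hm2 hN0).2.1, (main φ hm1 hm2 hN0).2.2⟩,
    fun φs hm1 hm2 hN0 => ⟨?_, ?_⟩⟩
  · rintro ⟨B, hB⟩
    refine ⟨(max B 1) ^ C, fun n => ?_⟩
    obtain ⟨h1n, hlow, hup⟩ := main (φs n) (hm1 n) (hm2 n) (hN0 n)
    refine le_trans hup (Real.rpow_le_rpow (le_trans zero_le_one h1n) ?_ hC0)
    exact le_trans (hB n) (le_max_left _ _)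
  · rintro ⟨B, hB⟩
    exact ⟨B, fun n => le_trans (main (φs n) (hm1 n) (hm2 n) (hN0 n)).2.1 (hB n)⟩
end

section
/- Let d ≥ 2. For every integer α ≥ 2 there exists a constant C(d, α) ≥ 1 such that for all integers n₁ ≥ n₂ ≥ ⋯ ≥ n_α ≥ 1: (1/C(d,α)) · (n₂ ⋯ n_α)^{(d−1)/2} ≤ ∫_{S^d} |Y_{n₁}(x) ⋯ Y_{n_α}(x)|² dμ_d(x) ≤ C(d,α) · (n₂ ⋯ n_α)^{(d−1)/2}, and likewise (1/C(d,α)) · (n₂ ⋯ n_α)^{(d−1)/2} ≤ ∫_{S^d} |Ỹ_{n₁}(x) ⋯ Ỹ_{n_α}(x)|² dμ_d(x) ≤ C(d,α) · (n₂ ⋯ n_α)^{(d−1)/2}. -/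
open MeasureTheory
open scoped ENNReal NNReal

/-- The surface measure on the unit sphere `S^d ⊂ ℝ^{d+1}`: the `d`-dimensional
Hausdorff measure on the sphere. -/
noncomputable def sphMeas (d : ℕ) :
    Measure (Metric.sphere (0 : EuclideanSpace ℝ (Fin (d + 1))) 1) :=
  μH[d]

/-- The highest-weight spherical harmonic `Y_n(x) = c (x₁ + i x₂)^n` with a given
normalizing constant `c`. -/
noncomputable def Yhw (d : ℕ) (c : ℝ) (n : ℕ)
    (x : Metric.sphere (0 : EuclideanSpace ℝ (Fin (d + 1))) 1) : ℂ :=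
  (c : ℂ) * (((x : EuclideanSpace ℝ (Fin (d + 1))) 0 : ℂ)
      + Complex.I * ((x : EuclideanSpace ℝ (Fin (d + 1))) 1 : ℂ)) ^ n

/-- The truncated highest-weight function `Ỹ_n`. -/
noncomputable def Ytil (d n : ℕ)
    (x : Metric.sphere (0 : EuclideanSpace ℝ (Fin (d + 1))) 1) : ℝ :=
  if Real.arccos (Real.sqrt (((x : EuclideanSpace ℝ (Fin (d + 1))) 0) ^ 2
        + ((x : EuclideanSpace ℝ (Fin (d + 1))) 1) ^ 2)) ≤ 1 / Real.sqrt n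
  then (n : ℝ) ^ (((d : ℝ) - 1) / 4) else 0

namespace Stmt16
open Finset



/-- ambient `x₀² + x₁²` -/
noncomputable def qa (d : ℕ) (x : EuclideanSpace ℝ (Fin (d+1))) : ℝ := x 0 ^ 2 + x 1 ^ 2

lemma mem_sphere_iff_sum_sq {d : ℕ} {x : EuclideanSpace ℝ (Fin (d+1))} :
    x ∈ Metric.sphere (0 : EuclideanSpace ℝ (Fin (d+1))) 1 ↔ ∑ i, x i ^ 2 = 1 := by
  rw [mem_sphere_zero_iff_norm, EuclideanSpace.norm_eq]
  have h0 : (0:ℝ) ≤ ∑ i, ‖x i‖ ^ 2 := Finset.sum_nonneg fun i _ => by positivity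
  rw [show (∑ i, ‖x i‖ ^ 2) = ∑ i, x i ^ 2 by simp [Real.norm_eq_abs, sq_abs]] at h0 ⊢
  exact Real.sqrt_eq_one

lemma fin_zero_ne_one {d : ℕ} (hd : 1 ≤ d) : (0 : Fin (d+1)) ≠ (1 : Fin (d+1)) := by
  intro h
  have := congrArg Fin.val h
  rw [Fin.val_zero, Fin.val_one', Nat.mod_eq_of_lt (by omega)] at this
  omega

lemma qa_eq_sum_pair {d : ℕ} (hd : 1 ≤ d) (x : EuclideanSpace ℝ (Fin (d+1))) :
    qa d x = ∑ i ∈ ({0, 1} : Finset (Fin (d+1))), x i ^ 2 := by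
  rw [Finset.sum_pair (fin_zero_ne_one hd)]; rfl

lemma qa_nonneg (d : ℕ) (x : EuclideanSpace ℝ (Fin (d+1))) : 0 ≤ qa d x := by
  unfold qa; positivity

lemma qa_le_one {d : ℕ} (hd : 1 ≤ d) {x : EuclideanSpace ℝ (Fin (d+1))}
    (hx : x ∈ Metric.sphere (0 : EuclideanSpace ℝ (Fin (d+1))) 1) : qa d x ≤ 1 := by
  rw [qa_eq_sum_pair hd, ← mem_sphere_iff_sum_sq.1 hx]
  exact Finset.sum_le_sum_of_subset_of_nonneg (Finset.subset_univ _)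
    (fun i _ _ => by positivity)

/-- a coordinate with index `≥ 2` is controlled by `1 - qa`. -/
lemma coord_sq_le {d : ℕ} (hd : 1 ≤ d) {x : EuclideanSpace ℝ (Fin (d+1))}
    (hx : x ∈ Metric.sphere (0 : EuclideanSpace ℝ (Fin (d+1))) 1)
    {k : Fin (d+1)} (hk : 2 ≤ (k : ℕ)) : x k ^ 2 ≤ 1 - qa d x := by
  have hsum := mem_sphere_iff_sum_sq.1 hx
  have hsub : ({0, 1} : Finset (Fin (d+1))) ⊆ Finset.univ := Finset.subset_univ _
  have hsplit := Finset.sum_sdiff (f := fun i => x i ^ 2) hsub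
  have hk0 : k ≠ 0 := by intro h; rw [h, Fin.val_zero] at hk; omega
  have hk1 : k ≠ 1 := by
    intro h; rw [h, Fin.val_one', Nat.mod_eq_of_lt (by omega)] at hk; omega
  have hmem : k ∈ Finset.univ \ ({0, 1} : Finset (Fin (d+1))) := by
    simp [hk0, hk1]
  have hle : x k ^ 2 ≤ ∑ i ∈ Finset.univ \ ({0, 1} : Finset (Fin (d+1))), x i ^ 2 :=
    Finset.single_le_sum (f := fun i => x i ^ 2) (fun i _ => by positivity) hmem
  rw [qa_eq_sum_pair hd]
  have : ∑ i ∈ Finset.univ \ ({0, 1} : Finset (Fin (d+1))), x i ^ 2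
      = 1 - ∑ i ∈ ({0, 1} : Finset (Fin (d+1))), x i ^ 2 := by
    rw [← hsum]; linarith [hsplit]
  linarith [hle, this ▸ hle]




/-- graph parametrization of the sphere over the hyperplane omitting coordinate `i`. -/
noncomputable def gr (d : ℕ) (i : Fin (d+1)) (σ : ℝ) (v : Fin d → ℝ) :
    EuclideanSpace ℝ (Fin (d+1)) :=
  (WithLp.equiv 2 (Fin (d+1) → ℝ)).symm
    (i.insertNth (σ * Real.sqrt (1 - ∑ j, v j ^ 2)) v)

lemma gr_apply (d : ℕ) (i : Fin (d+1)) (σ : ℝ) (v : Fin d → ℝ) (k : Fin (d+1)) :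
    gr d i σ v k = (i.insertNth (σ * Real.sqrt (1 - ∑ j, v j ^ 2)) v : Fin (d+1) → ℝ) k :=
  rfl

lemma gr_apply_same (d : ℕ) (i : Fin (d+1)) (σ : ℝ) (v : Fin d → ℝ) :
    gr d i σ v i = σ * Real.sqrt (1 - ∑ j, v j ^ 2) := by
  rw [gr_apply, Fin.insertNth_apply_same]

lemma gr_apply_succAbove (d : ℕ) (i : Fin (d+1)) (σ : ℝ) (v : Fin d → ℝ) (j : Fin d) :
    gr d i σ v (i.succAbove j) = v j := by
  rw [gr_apply, Fin.insertNth_apply_succAbove]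

/-- the domain of the graph parametrization. -/
def Dom (d : ℕ) : Set (Fin d → ℝ) := {v | ∑ j, v j ^ 2 ≤ 1 - 1/(d+1)}

lemma abs_sqrt_sub_sqrt_le {a b c : ℝ} (hc : 0 < c) (ha : c ≤ a) (hb : c ≤ b) :
    |Real.sqrt a - Real.sqrt b| ≤ |a - b| / (2 * Real.sqrt c) := by
  have ha0 : (0:ℝ) ≤ a := le_trans hc.le ha
  have hb0 : (0:ℝ) ≤ b := le_trans hc.le hb
  have hsa : Real.sqrt c ≤ Real.sqrt a := Real.sqrt_le_sqrt ha
  have hsb : Real.sqrt c ≤ Real.sqrt b := Real.sqrt_le_sqrt hb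
  have hscpos : 0 < Real.sqrt c := Real.sqrt_pos.2 hc
  have hpos : 0 < 2 * Real.sqrt c := by positivity
  rw [le_div_iff₀ hpos]
  calc |Real.sqrt a - Real.sqrt b| * (2 * Real.sqrt c)
      ≤ |Real.sqrt a - Real.sqrt b| * (Real.sqrt a + Real.sqrt b) := by
        apply mul_le_mul_of_nonneg_left (by linarith) (abs_nonneg _)
    _ = |(Real.sqrt a - Real.sqrt b) * (Real.sqrt a + Real.sqrt b)| := by
        rw [abs_mul, abs_of_nonneg (by positivity : (0:ℝ) ≤ Real.sqrt a + Real.sqrt b)]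
    _ = |a - b| := by
        congr 1
        nlinarith [Real.sq_sqrt ha0, Real.sq_sqrt hb0]

/-- Lipschitz constant for graph maps. -/
def Kgr (d : ℕ) : ℝ≥0 := ((2 * (d+1)^2 : ℕ) : ℝ≥0)

lemma gr_lipschitz (d : ℕ) (i : Fin (d+1)) (σ : ℝ) (hσ : |σ| = 1) :
    LipschitzOnWith (Kgr d) (gr d i σ) (Dom d) := by
  rw [lipschitzOnWith_iff_dist_le_mul]
  intro v hv w hw
  set A := ∑ j, v j ^ 2 with hA
  set B := ∑ j, w j ^ 2 with hB
  have hApos : A ≤ 1 - 1/(d+1) := hv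
  have hBpos : B ≤ 1 - 1/(d+1) := hw
  have hA0 : 0 ≤ A := Finset.sum_nonneg fun j _ => by positivity
  have hB0 : 0 ≤ B := Finset.sum_nonneg fun j _ => by positivity
  set D := dist v w with hD
  have hD0 : (0:ℝ) ≤ D := dist_nonneg
  have hcoord : ∀ j, |v j - w j| ≤ D := by
    intro j
    simpa [Real.dist_eq] using dist_le_pi_dist v w j
  have hv1 : ∀ j, |v j| ≤ 1 := by
    intro j
    have h1 : v j ^ 2 ≤ A := Finset.single_le_sum (f := fun j => v j ^ 2)
      (fun j _ => by positivity) (Finset.mem_univ j)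
    have h2 : (0:ℝ) ≤ 1/((d:ℝ)+1) := by positivity
    nlinarith [abs_nonneg (v j), sq_abs (v j)]
  have hw1 : ∀ j, |w j| ≤ 1 := by
    intro j
    have h1 : w j ^ 2 ≤ B := Finset.single_le_sum (f := fun j => w j ^ 2)
      (fun j _ => by positivity) (Finset.mem_univ j)
    have h2 : (0:ℝ) ≤ 1/((d:ℝ)+1) := by positivity
    nlinarith [abs_nonneg (w j), sq_abs (w j)]
  have hAB : |A - B| ≤ 2 * d * D := by
    rw [hA, hB, ← Finset.sum_sub_distrib]
    calc |∑ j, (v j ^ 2 - w j ^ 2)| ≤ ∑ j, |v j ^ 2 - w j ^ 2| :=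
          Finset.abs_sum_le_sum_abs _ _
      _ ≤ ∑ _j : Fin d, 2 * D := by
          apply Finset.sum_le_sum
          intro j _
          have h3 : v j ^ 2 - w j ^ 2 = (v j + w j) * (v j - w j) := by ring
          rw [h3, abs_mul]
          have h1 : |v j + w j| ≤ 2 := by
            calc |v j + w j| ≤ |v j| + |w j| := abs_add_le _ _
              _ ≤ 2 := by linarith [hv1 j, hw1 j]
          calc |v j + w j| * |v j - w j| ≤ 2 * |v j - w j| :=
                mul_le_mul_of_nonneg_right h1 (abs_nonneg _)
            _ ≤ 2 * D := by linarith [hcoord j]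
      _ = 2 * d * D := by
          rw [Finset.sum_const, Finset.card_univ, Fintype.card_fin]
          push_cast; ring
  -- sqrt term bound
  have hdc : (0:ℝ) < 1/((d:ℝ)+1) := by positivity
  have h1A : 1/((d:ℝ)+1) ≤ 1 - A := by linarith
  have h1B : 1/((d:ℝ)+1) ≤ 1 - B := by linarith
  have hsq : |Real.sqrt (1 - A) - Real.sqrt (1 - B)| ≤ (d:ℝ) * ((d:ℝ)+1) * D := by
    have h1 := abs_sqrt_sub_sqrt_le hdc h1A h1B
    have h2 : |(1 - A) - (1 - B)| = |A - B| := by rw [abs_sub_comm]; congr 1; ring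
    rw [h2] at h1
    have hsc : 1/((d:ℝ)+1) ≤ Real.sqrt (1/((d:ℝ)+1)) := by
      refine (Real.le_sqrt hdc.le hdc.le).2 ?_
      have hle1 : 1/((d:ℝ)+1) ≤ 1 := by
        rw [div_le_one (by positivity)]
        have : (0:ℝ) ≤ (d:ℝ) := Nat.cast_nonneg d
        linarith
      nlinarith [hdc]
    have hpos : (0:ℝ) < 2 * Real.sqrt (1/((d:ℝ)+1)) := by
      positivity
    have h3 : |Real.sqrt (1 - A) - Real.sqrt (1 - B)| * (2 * Real.sqrt (1/((d:ℝ)+1))) ≤ |A - B| :=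
      (le_div_iff₀ hpos).1 h1
    have hd1 : (0:ℝ) < (d:ℝ)+1 := by positivity
    have h5 : |Real.sqrt (1 - A) - Real.sqrt (1 - B)| * (2 * (1/((d:ℝ)+1))) ≤ 2*(d:ℝ)*D := by
      nlinarith [h3, hAB,
        mul_nonneg (abs_nonneg (Real.sqrt (1 - A) - Real.sqrt (1 - B)))
          (sub_nonneg.2 hsc)]
    calc |Real.sqrt (1 - A) - Real.sqrt (1 - B)|
        = |Real.sqrt (1 - A) - Real.sqrt (1 - B)| * (2 * (1/((d:ℝ)+1))) * (((d:ℝ)+1)/2) := by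
          field_simp
      _ ≤ 2*(d:ℝ)*D * (((d:ℝ)+1)/2) := mul_le_mul_of_nonneg_right h5 (by positivity)
      _ = (d:ℝ)*((d:ℝ)+1)*D := by ring
  -- assemble
  have hKD0 : (0:ℝ) ≤ (2*((d:ℝ)+1)^2) * D := by positivity
  have hsum : ∑ k, dist (gr d i σ v k) (gr d i σ w k) ^ 2
      ≤ ((2*((d:ℝ)+1)^2) * D)^2 := by
    rw [Fin.sum_univ_succAbove (fun k => dist (gr d i σ v k) (gr d i σ w k) ^ 2) i]
    have hterm : dist (gr d i σ v i) (gr d i σ w i) ^ 2 ≤ ((d:ℝ) * ((d:ℝ)+1) * D)^2 := by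
      rw [gr_apply_same, gr_apply_same, Real.dist_eq]
      have : σ * Real.sqrt (1 - A) - σ * Real.sqrt (1 - B)
          = σ * (Real.sqrt (1 - A) - Real.sqrt (1 - B)) := by ring
      rw [this, abs_mul, hσ, one_mul]
      have h4 : (0:ℝ) ≤ (d:ℝ) * ((d:ℝ)+1) * D := by positivity
      exact pow_le_pow_left₀ (abs_nonneg _) hsq 2
    have hrest : ∑ j : Fin d, dist (gr d i σ v (i.succAbove j)) (gr d i σ w (i.succAbove j)) ^ 2
        ≤ (d:ℝ) * D^2 := by
      calc ∑ j : Fin d, dist (gr d i σ v (i.succAbove j)) (gr d i σ w (i.succAbove j)) ^ 2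
          ≤ ∑ _j : Fin d, D^2 := by
            apply Finset.sum_le_sum
            intro j _
            rw [gr_apply_succAbove, gr_apply_succAbove, Real.dist_eq]
            exact pow_le_pow_left₀ (abs_nonneg _) (hcoord j) 2
        _ = (d:ℝ) * D^2 := by
            rw [Finset.sum_const, Finset.card_univ, Fintype.card_fin]
            push_cast; ring
    have hnum : ((d:ℝ) * ((d:ℝ)+1) * D)^2 + (d:ℝ) * D^2 ≤ ((2*((d:ℝ)+1)^2) * D)^2 := by
      have hd0 : (0:ℝ) ≤ (d:ℝ) := Nat.cast_nonneg d
      nlinarith [sq_nonneg D, sq_nonneg ((d:ℝ)+1), sq_nonneg ((d:ℝ)*((d:ℝ)+1)),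
        mul_nonneg (mul_nonneg hd0 hd0) (sq_nonneg D)]
    linarith
  rw [EuclideanSpace.dist_eq]
  have : Real.sqrt (∑ k, dist (gr d i σ v k) (gr d i σ w k) ^ 2)
      ≤ Real.sqrt (((2*((d:ℝ)+1)^2) * D)^2) := Real.sqrt_le_sqrt hsum
  rw [Real.sqrt_sq hKD0] at this
  refine le_trans this ?_
  have : ((Kgr d : ℝ≥0) : ℝ) = 2*((d:ℝ)+1)^2 := by
    rw [Kgr]; push_cast; ring
  rw [this]



lemma gr_mem_sphere {d : ℕ} {i : Fin (d+1)} {σ : ℝ} (hσ : |σ| = 1) {v : Fin d → ℝ}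
    (hv : ∑ j, v j ^ 2 ≤ 1) :
    gr d i σ v ∈ Metric.sphere (0 : EuclideanSpace ℝ (Fin (d+1))) 1 := by
  rw [mem_sphere_iff_sum_sq]
  rw [Fin.sum_univ_succAbove (fun k => gr d i σ v k ^ 2) i]
  have h1 : gr d i σ v i ^ 2 = 1 - ∑ j, v j ^ 2 := by
    rw [gr_apply_same, mul_pow, ← sq_abs σ, hσ]
    rw [Real.sq_sqrt (by linarith)]
    ring
  have h2 : ∀ j, gr d i σ v (i.succAbove j) ^ 2 = v j ^ 2 := fun j => by
    rw [gr_apply_succAbove]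
  simp only [h2, h1]
  ring

lemma removeNth_sum {d : ℕ} (x : EuclideanSpace ℝ (Fin (d+1))) (i : Fin (d+1)) :
    ∑ j : Fin d, x (i.succAbove j) ^ 2 = (∑ k, x k ^ 2) - x i ^ 2 := by
  rw [Fin.sum_univ_succAbove (fun k => x k ^ 2) i]
  ring

lemma gr_removeNth_eq {d : ℕ} {x : EuclideanSpace ℝ (Fin (d+1))}
    (hx : x ∈ Metric.sphere (0 : EuclideanSpace ℝ (Fin (d+1))) 1)
    (i : Fin (d+1)) {σ : ℝ} (hσx : σ * |x i| = x i) :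
    gr d i σ (fun j => x (i.succAbove j)) = x := by
  have hsum := mem_sphere_iff_sum_sq.1 hx
  have hs : ∑ j : Fin d, x (i.succAbove j) ^ 2 = 1 - x i ^ 2 := by
    rw [removeNth_sum, hsum]
  have hval : σ * Real.sqrt (1 - ∑ j : Fin d, x (i.succAbove j) ^ 2) = x i := by
    rw [hs]
    have : 1 - (1 - x i ^ 2) = x i ^ 2 := by ring
    rw [this, Real.sqrt_sq_eq_abs, hσx]
  ext k
  rw [gr_apply, hval]
  exact congrFun (Fin.insertNth_self_removeNth i x.ofLp) k

/-- choice of sign for representation. -/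
lemma exists_sign {t : ℝ} : ∃ σ : ℝ, |σ| = 1 ∧ σ * |t| = t := by
  rcases le_or_gt 0 t with h | h
  · exact ⟨1, abs_one, by rw [abs_of_nonneg h]; ring⟩
  · exact ⟨-1, by rw [abs_neg, abs_one], by rw [abs_of_neg h]; ring⟩

/-- the ambient band. -/
def ABand (d : ℕ) (s : ℝ) : Set (EuclideanSpace ℝ (Fin (d+1))) :=
  {x | x ∈ Metric.sphere (0 : EuclideanSpace ℝ (Fin (d+1))) 1 ∧ 1 - s ≤ qa d x}

/-- constrained coordinates part of the band domain. -/
def SmallBox (d : ℕ) (s : ℝ) : Set (Fin d → ℝ) :=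
  {v | ∀ j : Fin d, 1 ≤ (j : ℕ) → v j ^ 2 ≤ s}

lemma succAbove_val_ge {d : ℕ} (i : Fin (d+1)) (hi : (i : ℕ) ≤ 1)
    (j : Fin d) (hj : 1 ≤ (j : ℕ)) : 2 ≤ ((i.succAbove j : Fin (d+1)) : ℕ) := by
  have h : i ≤ j.castSucc := by
    rw [Fin.le_def, Fin.coe_castSucc]
    omega
  rw [Fin.succAbove_of_le_castSucc i j h, Fin.val_succ]
  omega

/-- covering of the band by four graph pieces, for `s ≤ 1/4`. -/
lemma aband_subset_cover {d : ℕ} (hd : 2 ≤ d) {s : ℝ} (hs : 0 < s) (hs' : s ≤ 1/4) :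
    ABand d s ⊆
      (gr d 0 1 '' (Dom d ∩ SmallBox d s)) ∪ (gr d 0 (-1) '' (Dom d ∩ SmallBox d s)) ∪
      (gr d 1 1 '' (Dom d ∩ SmallBox d s)) ∪ (gr d 1 (-1) '' (Dom d ∩ SmallBox d s)) := by
  rintro x ⟨hx, hq⟩
  have hd1 : 1 ≤ d := by omega
  have hdr : (2:ℝ) ≤ (d:ℝ) := by exact_mod_cast hd
  -- choose the big coordinate among 0, 1
  have hbig : ∃ i : Fin (d+1), (i:ℕ) ≤ 1 ∧ 1/((d:ℝ)+1) ≤ x i ^ 2 := by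
    rcases le_or_gt (x 1 ^ 2) (x 0 ^ 2) with h | h
    · refine ⟨0, by simp, ?_⟩
      have : 1 - s ≤ x 0 ^ 2 + x 1 ^ 2 := hq
      have h1 : 3/8 ≤ x 0 ^ 2 := by unfold qa at hq; nlinarith
      have : 1/((d:ℝ)+1) ≤ 3/8 := by
        rw [div_le_div_iff₀ (by positivity) (by norm_num)]
        linarith
      linarith
    · refine ⟨1, ?_, ?_⟩
      · rw [Fin.val_one', Nat.mod_eq_of_lt (by omega)]
      · have h1 : 3/8 ≤ x 1 ^ 2 := by unfold qa at hq; nlinarith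
        have : 1/((d:ℝ)+1) ≤ 3/8 := by
          rw [div_le_div_iff₀ (by positivity) (by norm_num)]
          linarith
        linarith
  obtain ⟨i, hi1, hib⟩ := hbig
  obtain ⟨σ, hσ, hσx⟩ := exists_sign (t := x i)
  have hsum := mem_sphere_iff_sum_sq.1 hx
  have hmemDom : (fun j => x (i.succAbove j)) ∈ Dom d := by
    show ∑ j : Fin d, x (i.succAbove j) ^ 2 ≤ 1 - 1/(d+1)
    rw [removeNth_sum, hsum]
    push_cast
    linarith
  have hmemBox : (fun j => x (i.succAbove j)) ∈ SmallBox d s := by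
    intro j hj
    have h2 := succAbove_val_ge i hi1 j hj
    have := coord_sq_le hd1 hx h2
    linarith
  have heq : gr d i σ (fun j => x (i.succAbove j)) = x := gr_removeNth_eq hx i hσx
  have hmem : x ∈ gr d i σ '' (Dom d ∩ SmallBox d s) :=
    ⟨_, ⟨hmemDom, hmemBox⟩, heq⟩
  -- dispatch on i and σ
  have hicase : i = 0 ∨ i = 1 := by
    rcases Nat.lt_or_ge (i : ℕ) 1 with h | h
    · left; ext; rw [Fin.val_zero]; omega
    · right; ext
      rw [Fin.val_one', Nat.mod_eq_of_lt (by omega)]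
      omega
  have hσcase : σ = 1 ∨ σ = -1 := by
    rcases abs_eq (by norm_num : (0:ℝ) ≤ 1) |>.1 hσ with h | h
    · left; exact h
    · right; exact h
  rcases hicase with rfl | rfl <;> rcases hσcase with rfl | rfl
  · exact Or.inl (Or.inl (Or.inl hmem))
  · exact Or.inl (Or.inl (Or.inr hmem))
  · exact Or.inl (Or.inr hmem)
  · exact Or.inr hmem

/-- covering of the whole sphere by graph pieces. -/
lemma sphere_subset_cover (d : ℕ) :
    (Metric.sphere (0 : EuclideanSpace ℝ (Fin (d+1))) 1 : Set (EuclideanSpace ℝ (Fin (d+1))))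
      ⊆ ⋃ i : Fin (d+1), (gr d i 1 '' Dom d ∪ gr d i (-1) '' Dom d) := by
  intro x hx
  have hsum := mem_sphere_iff_sum_sq.1 hx
  have hbig : ∃ i : Fin (d+1), 1/((d:ℝ)+1) ≤ x i ^ 2 := by
    by_contra h
    push_neg at h
    have hlt : ∑ k, x k ^ 2 < ∑ _k : Fin (d+1), 1/((d:ℝ)+1) :=
      Finset.sum_lt_sum_of_nonempty ⟨0, Finset.mem_univ 0⟩ (fun k _ => h k)
    rw [hsum, Finset.sum_const, Finset.card_univ, Fintype.card_fin] at hlt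
    have : ((d:ℝ)+1) * (1/((d:ℝ)+1)) = 1 := by field_simp
    rw [nsmul_eq_mul] at hlt
    push_cast at hlt
    rw [this] at hlt
    exact lt_irrefl _ hlt
  obtain ⟨i, hib⟩ := hbig
  obtain ⟨σ, hσ, hσx⟩ := exists_sign (t := x i)
  have hmemDom : (fun j => x (i.succAbove j)) ∈ Dom d := by
    show ∑ j : Fin d, x (i.succAbove j) ^ 2 ≤ 1 - 1/(d+1)
    rw [removeNth_sum, hsum]
    push_cast
    linarith
  have heq : gr d i σ (fun j => x (i.succAbove j)) = x := gr_removeNth_eq hx i hσx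
  refine Set.mem_iUnion.2 ⟨i, ?_⟩
  have hσcase : σ = 1 ∨ σ = -1 := by
    rcases abs_eq (by norm_num : (0:ℝ) ≤ 1) |>.1 hσ with h | h
    · left; exact h
    · right; exact h
  rcases hσcase with rfl | rfl
  · exact Or.inl ⟨_, hmemDom, heq⟩
  · exact Or.inr ⟨_, hmemDom, heq⟩


lemma haus_pi_eq (d : ℕ) : (μH[(d:ℝ)] : Measure (Fin d → ℝ)) = volume := by
  have h := MeasureTheory.hausdorffMeasure_pi_real (ι := Fin d)
  rwa [Fintype.card_fin] at h

lemma prod_ofReal_box (d : ℕ) (hd : 1 ≤ d) (c0 u : ℝ) :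
    ∏ j : Fin d, ENNReal.ofReal ((if (j:ℕ) = 0 then c0 else u) - -(if (j:ℕ) = 0 then c0 else u))
      = ENNReal.ofReal (2*c0) * ENNReal.ofReal (2*u) ^ (d-1) := by
  haveI : NeZero d := ⟨by omega⟩
  rw [← Finset.mul_prod_erase Finset.univ _ (Finset.mem_univ (0 : Fin d))]
  congr 1
  · norm_num; ring_nf; rw [ENNReal.ofReal_mul' (by norm_num), ENNReal.ofReal_ofNat]
  · rw [Finset.prod_congr rfl (fun j hj => ?_), Finset.prod_const,
      Finset.card_erase_of_mem (Finset.mem_univ _), Finset.card_univ, Fintype.card_fin]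
    have hj0 : j ≠ 0 := (Finset.mem_erase.1 hj).1
    have : (j:ℕ) ≠ 0 := fun h => hj0 (Fin.ext (by simpa using h))
    simp only [this, if_false]
    norm_num
    ring_nf
    rw [ENNReal.ofReal_mul' (by norm_num), ENNReal.ofReal_ofNat]

/-- Hausdorff measure of a symmetric box. -/
lemma haus_box (d : ℕ) (r : Fin d → ℝ) :
    μH[(d:ℝ)] (Set.univ.pi fun j => Set.Icc (-(r j)) (r j))
      = ∏ j, ENNReal.ofReal (r j - -(r j)) := by
  rw [haus_pi_eq, MeasureTheory.volume_pi_pi]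
  exact Finset.prod_congr rfl fun j _ => Real.volume_Icc

lemma sq_le_of_mem_Icc {a r : ℝ} (h : a ∈ Set.Icc (-r) r) : a^2 ≤ r^2 := by
  rcases h with ⟨h1, h2⟩
  nlinarith

/-- the sphere has finite Hausdorff measure. -/
lemma sphere_meas_ne_top (d : ℕ) :
    μH[(d:ℝ)] (Metric.sphere (0 : EuclideanSpace ℝ (Fin (d+1))) 1 : Set (EuclideanSpace ℝ (Fin (d+1)))) ≠ ⊤ := by
  have hdd : (0:ℝ) ≤ (d:ℝ) := Nat.cast_nonneg d
  have hDomBox : Dom d ⊆ Set.univ.pi fun _j : Fin d => Set.Icc (-(1:ℝ)) 1 := by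
    intro v hv j _
    have h1 : v j ^ 2 ≤ ∑ k, v k ^ 2 := Finset.single_le_sum (f := fun k => v k ^ 2)
      (fun k _ => by positivity) (Finset.mem_univ j)
    have h2 : ∑ k, v k ^ 2 ≤ 1 - 1/((d:ℝ)+1) := hv
    have h3 : v j ^ 2 ≤ 1 := by
      have : (0:ℝ) ≤ 1/((d:ℝ)+1) := by positivity
      linarith
    constructor
    · nlinarith
    · nlinarith
  have hDomMeas : μH[(d:ℝ)] (Dom d) ≠ ⊤ := by
    apply ne_top_of_le_ne_top ?_ (measure_mono hDomBox)
    rw [haus_box]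
    exact ENNReal.prod_ne_top fun j _ => ENNReal.ofReal_ne_top
  have himg : ∀ (i : Fin (d+1)) (σ : ℝ), |σ| = 1 → μH[(d:ℝ)] (gr d i σ '' Dom d) ≠ ⊤ := by
    intro i σ hσ
    apply ne_top_of_le_ne_top ?_ ((gr_lipschitz d i σ hσ).hausdorffMeasure_image_le hdd)
    refine ENNReal.mul_ne_top ?_ hDomMeas
    rw [show ((d:ℝ)) = ((d:ℕ):ℝ) from rfl, ENNReal.rpow_natCast]
    exact ENNReal.pow_ne_top ENNReal.coe_ne_top
  apply ne_top_of_le_ne_top ?_ (measure_mono (sphere_subset_cover d))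
  apply ne_top_of_le_ne_top ?_ (measure_iUnion_le _)
  rw [tsum_fintype]
  apply ne_of_lt
  apply ENNReal.sum_lt_top.2
  intro i _
  apply lt_of_le_of_lt (measure_union_le _ _)
  exact ENNReal.add_lt_top.2 ⟨lt_top_iff_ne_top.2 (himg i 1 (by norm_num)),
    lt_top_iff_ne_top.2 (himg i (-1) (by rw [abs_neg, abs_one]))⟩

/-- `(√s)^(d-1) = s^((d-1)/2)` -/
lemma sqrt_pow_eq_rpow {d : ℕ} (hd : 1 ≤ d) {s : ℝ} (hs : 0 ≤ s) :
    Real.sqrt s ^ (d-1) = s ^ (((d:ℝ)-1)/2) := by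
  rw [Real.sqrt_eq_rpow, ← Real.rpow_natCast (s ^ ((1:ℝ)/2)) (d-1), ← Real.rpow_mul hs]
  congr 1
  rw [Nat.cast_sub hd]
  push_cast
  ring

/-- upper bound for the measure of the ambient band, all `s > 0`. -/
lemma aband_meas_upper (d : ℕ) (hd : 2 ≤ d) : ∃ b : ℝ, 1 ≤ b ∧ ∀ s : ℝ, 0 < s →
    μH[(d:ℝ)] (ABand d s) ≤ ENNReal.ofReal (b * s ^ (((d:ℝ)-1)/2)) := by
  have hd1 : 1 ≤ d := by omega
  have hdd : (0:ℝ) ≤ (d:ℝ) := Nat.cast_nonneg d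
  have hβ : (0:ℝ) ≤ ((d:ℝ)-1)/2 := by
    have : (2:ℝ) ≤ (d:ℝ) := by exact_mod_cast hd
    linarith
  set K : ℝ := ((Kgr d : ℝ≥0) : ℝ) with hK
  have hK0 : 0 ≤ K := (Kgr d).coe_nonneg
  set T : ℝ := (μH[(d:ℝ)] (Metric.sphere (0 : EuclideanSpace ℝ (Fin (d+1))) 1 :
      Set (EuclideanSpace ℝ (Fin (d+1))))).toReal with hT
  have hT0 : 0 ≤ T := ENNReal.toReal_nonneg
  refine ⟨1 + 8 * K^d * 2^d + T * 4 ^ (((d:ℝ)-1)/2), ?_, ?_⟩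
  · have : (0:ℝ) ≤ 8 * K^d * 2^d := by positivity
    have h2 : (0:ℝ) ≤ T * 4 ^ (((d:ℝ)-1)/2) := by positivity
    linarith
  intro s hs
  set β := ((d:ℝ)-1)/2 with hβdef
  have hsβ : (0:ℝ) ≤ s ^ β := Real.rpow_nonneg hs.le β
  rcases le_or_gt s (1/4) with hs4 | hs4
  · -- the covering case
    have hsubset := aband_subset_cover hd hs hs4
    have hDS : Dom d ∩ SmallBox d s ⊆
        Set.univ.pi fun j : Fin d => Set.Icc (-(if (j:ℕ) = 0 then 1 else Real.sqrt s))
          ((if (j:ℕ) = 0 then 1 else Real.sqrt s)) := by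
      rintro v ⟨hv, hvb⟩ j _
      by_cases hj : (j:ℕ) = 0
      · simp only [hj, if_true]
        have h1 : v j ^ 2 ≤ ∑ k, v k ^ 2 := Finset.single_le_sum (f := fun k => v k ^ 2)
          (fun k _ => by positivity) (Finset.mem_univ j)
        have h2 : ∑ k, v k ^ 2 ≤ 1 - 1/((d:ℝ)+1) := hv
        have h3 : (0:ℝ) ≤ 1/((d:ℝ)+1) := by positivity
        constructor <;> nlinarith
      · simp only [hj, if_false]
        have h1 : v j ^ 2 ≤ s := hvb j (by omega)
        have h2 : |v j| ≤ Real.sqrt s := Real.abs_le_sqrt h1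
        rw [abs_le] at h2
        exact h2
    have hpiece : ∀ σ : ℝ, |σ| = 1 → ∀ i : Fin (d+1),
        μH[(d:ℝ)] (gr d i σ '' (Dom d ∩ SmallBox d s))
          ≤ ENNReal.ofReal (K^d * (2 * (2*Real.sqrt s)^(d-1))) := by
      intro σ hσ i
      have hl := ((gr_lipschitz d i σ hσ).mono Set.inter_subset_left).hausdorffMeasure_image_le
        (s := Dom d ∩ SmallBox d s) hdd
      refine le_trans hl ?_
      have hbox : μH[(d:ℝ)] (Dom d ∩ SmallBox d s) ≤
          μH[(d:ℝ)] (Set.univ.pi fun j : Fin d => Set.Icc (-(if (j:ℕ) = 0 then 1 else Real.sqrt s))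
            ((if (j:ℕ) = 0 then 1 else Real.sqrt s))) := measure_mono hDS
      rw [haus_box] at hbox
      rw [prod_ofReal_box d hd1 1 (Real.sqrt s)] at hbox
      calc (↑(Kgr d) : ℝ≥0∞) ^ (d:ℝ) * μH[(d:ℝ)] (Dom d ∩ SmallBox d s)
          ≤ (↑(Kgr d) : ℝ≥0∞) ^ (d:ℝ) * (ENNReal.ofReal (2*1) * ENNReal.ofReal (2*Real.sqrt s) ^ (d-1)) :=
            mul_le_mul_right hbox _
        _ = ENNReal.ofReal (K^d * (2 * (2*Real.sqrt s)^(d-1))) := by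
            rw [show ((d:ℝ)) = ((d:ℕ):ℝ) from rfl, ENNReal.rpow_natCast,
              ← ENNReal.ofReal_coe_nnreal]
            rw [← ENNReal.ofReal_pow hK0, ← ENNReal.ofReal_pow (by positivity), ← ENNReal.ofReal_mul (by positivity),
              ← ENNReal.ofReal_mul (by positivity)]
            norm_num
    have hcover : μH[(d:ℝ)] (ABand d s) ≤ μH[(d:ℝ)]
        ((gr d 0 1 '' (Dom d ∩ SmallBox d s) ∪ gr d 0 (-1) '' (Dom d ∩ SmallBox d s) ∪
          gr d 1 1 '' (Dom d ∩ SmallBox d s)) ∪ gr d 1 (-1) '' (Dom d ∩ SmallBox d s)) :=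
      measure_mono hsubset
    have hle : μH[(d:ℝ)] (ABand d s) ≤ 4 * ENNReal.ofReal (K^d * (2 * (2*Real.sqrt s)^(d-1))) := by
      refine le_trans hcover ?_
      have h3 := measure_union_le (μ := μH[(d:ℝ)])
        ((gr d 0 1 '' (Dom d ∩ SmallBox d s)) ∪ (gr d 0 (-1) '' (Dom d ∩ SmallBox d s)))
        (gr d 1 1 '' (Dom d ∩ SmallBox d s))
      have h4 := measure_union_le (μ := μH[(d:ℝ)])
        (gr d 0 1 '' (Dom d ∩ SmallBox d s)) (gr d 0 (-1) '' (Dom d ∩ SmallBox d s))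
      have p1 := hpiece 1 (by norm_num) 0
      have p2 := hpiece (-1) (by rw [abs_neg, abs_one]) 0
      have p3 := hpiece 1 (by norm_num) 1
      have p4 := hpiece (-1) (by rw [abs_neg, abs_one]) 1
      calc μH[(d:ℝ)] (((gr d 0 1 '' (Dom d ∩ SmallBox d s)) ∪ (gr d 0 (-1) '' (Dom d ∩ SmallBox d s)) ∪
              (gr d 1 1 '' (Dom d ∩ SmallBox d s))) ∪ (gr d 1 (-1) '' (Dom d ∩ SmallBox d s)))
          ≤ μH[(d:ℝ)] ((gr d 0 1 '' (Dom d ∩ SmallBox d s)) ∪ (gr d 0 (-1) '' (Dom d ∩ SmallBox d s)) ∪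
              (gr d 1 1 '' (Dom d ∩ SmallBox d s))) + μH[(d:ℝ)] (gr d 1 (-1) '' (Dom d ∩ SmallBox d s)) :=
            measure_union_le _ _
        _ ≤ 4 * ENNReal.ofReal (K^d * (2 * (2*Real.sqrt s)^(d-1))) := by
            have := le_trans h3 (add_le_add (le_trans h4 (add_le_add p1 p2)) p3)
            calc _ ≤ (ENNReal.ofReal (K^d * (2 * (2*Real.sqrt s)^(d-1))) +
                  ENNReal.ofReal (K^d * (2 * (2*Real.sqrt s)^(d-1))) +
                  ENNReal.ofReal (K^d * (2 * (2*Real.sqrt s)^(d-1)))) +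
                  ENNReal.ofReal (K^d * (2 * (2*Real.sqrt s)^(d-1))) := add_le_add this p4
              _ = 4 * ENNReal.ofReal (K^d * (2 * (2*Real.sqrt s)^(d-1))) := by ring
    refine le_trans hle ?_
    rw [show (4:ℝ≥0∞) = ENNReal.ofReal 4 by norm_num, ← ENNReal.ofReal_mul (by norm_num)]
    apply ENNReal.ofReal_le_ofReal
    have hexp : (2*Real.sqrt s)^(d-1) = 2^(d-1) * s ^ β := by
      rw [mul_pow, sqrt_pow_eq_rpow hd1 hs.le]
    rw [hexp]
    have h2d : (2:ℝ)^(d-1) ≤ 2^d := pow_le_pow_right₀ (by norm_num) (by omega)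
    have hTnn : (0:ℝ) ≤ T * 4 ^ β := by positivity
    have hKd : (0:ℝ) ≤ K ^ d := by positivity
    calc 4 * (K^d * (2 * (2^(d-1) * s ^ β))) = (8 * K^d * 2^(d-1)) * s ^ β := by ring
      _ ≤ (1 + 8 * K^d * 2^d + T * 4 ^ β) * s ^ β := by
          apply mul_le_mul_of_nonneg_right ?_ hsβ
          nlinarith
  · -- the crude case s > 1/4
    have hmono : ABand d s ⊆ (Metric.sphere (0 : EuclideanSpace ℝ (Fin (d+1))) 1 :
        Set (EuclideanSpace ℝ (Fin (d+1)))) := fun x hx => hx.1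
    refine le_trans (measure_mono hmono) ?_
    rw [← ENNReal.ofReal_toReal (sphere_meas_ne_top d), ← hT]
    apply ENNReal.ofReal_le_ofReal
    have h4 : (4:ℝ)^β * (1/4:ℝ)^β = 1 := by
      rw [← Real.mul_rpow (by norm_num) (by norm_num)]
      norm_num
    have hs4' : (1/4:ℝ)^β ≤ s^β := Real.rpow_le_rpow (by norm_num) (le_of_lt hs4) hβ
    have h40 : (0:ℝ) ≤ (4:ℝ)^β := Real.rpow_nonneg (by norm_num) β
    have hKd : (0:ℝ) ≤ 8 * K^d * 2^d := by positivity
    have : T = T * ((4:ℝ)^β * (1/4:ℝ)^β) := by rw [h4]; ring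
    calc T = T * (4:ℝ)^β * (1/4:ℝ)^β := by rw [← mul_assoc] at this; linarith [this]
      _ ≤ T * (4:ℝ)^β * s^β := by
          apply mul_le_mul_of_nonneg_left hs4' (by positivity)
      _ ≤ (1 + 8 * K^d * 2^d + T * 4 ^ β) * s ^ β := by
          apply mul_le_mul_of_nonneg_right ?_ hsβ
          linarith

/-- the projection dropping coordinate `1`. -/
def proj (d : ℕ) (x : EuclideanSpace ℝ (Fin (d+1))) : Fin d → ℝ :=
  fun j => x ((1 : Fin (d+1)).succAbove j)

lemma coord_dist_le {d : ℕ} (x y : EuclideanSpace ℝ (Fin (d+1))) (k : Fin (d+1)) :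
    dist (x k) (y k) ≤ dist x y := by
  rw [EuclideanSpace.dist_eq, show dist (x k) (y k) = Real.sqrt (dist (x k) (y k)^2) from
    (Real.sqrt_sq dist_nonneg).symm]
  apply Real.sqrt_le_sqrt
  exact Finset.single_le_sum (f := fun i => dist (x i) (y i)^2)
    (fun i _ => by positivity) (Finset.mem_univ k)

lemma proj_lipschitz (d : ℕ) : LipschitzWith 1 (proj d) := by
  rw [lipschitzWith_iff_dist_le_mul]
  intro x y
  rw [NNReal.coe_one, one_mul]
  rw [dist_pi_le_iff dist_nonneg]
  intro j
  exact coord_dist_le x y _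

/-- lower bound for the band measure. -/
lemma aband_meas_lower (d : ℕ) (hd : 2 ≤ d) : ∃ a : ℝ, 0 < a ∧ ∀ s : ℝ, 0 < s → s ≤ 1/2 →
    ENNReal.ofReal (a * s ^ (((d:ℝ)-1)/2)) ≤ μH[(d:ℝ)] (ABand d s) := by
  have hd1 : 1 ≤ d := by omega
  have hdd : (0:ℝ) ≤ (d:ℝ) := Nat.cast_nonneg d
  have hd0 : (0:ℝ) < (d:ℝ) := by exact_mod_cast (by omega : 0 < d)
  set β := ((d:ℝ)-1)/2 with hβdef
  refine ⟨2^(d-1) * ((1:ℝ)/d)^β, by positivity, ?_⟩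
  haveI : NeZero d := ⟨by omega⟩
  intro s hs hs2
  -- the box
  set r : Fin d → ℝ := fun j => if (j:ℕ) = 0 then (1/2 : ℝ) else Real.sqrt (s/d) with hr
  have hsd0 : (0:ℝ) ≤ s/d := by positivity
  have hbox_sub : (Set.univ.pi fun j => Set.Icc (-(r j)) (r j)) ⊆ proj d '' ABand d s := by
    intro v hv
    have hv0 : v 0 ∈ Set.Icc (-(1/2:ℝ)) (1/2:ℝ) := by
      have := hv 0 (Set.mem_univ _)
      simpa [hr] using this
    have hvj : ∀ j : Fin d, j ≠ 0 → v j ^ 2 ≤ s/d := by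
      intro j hj
      have hmem := hv j (Set.mem_univ _)
      have hjv : (j:ℕ) ≠ 0 := fun h => hj (Fin.ext (by simpa using h))
      rw [hr] at hmem
      simp only [hjv, if_false] at hmem
      have := sq_le_of_mem_Icc hmem
      rwa [Real.sq_sqrt hsd0] at this
    have hv0sq : v 0 ^ 2 ≤ 1/4 := by
      have := sq_le_of_mem_Icc hv0
      nlinarith [this]
    have hsum_erase : ∑ j ∈ Finset.univ.erase (0 : Fin d), v j ^ 2 ≤ s := by
      calc ∑ j ∈ Finset.univ.erase (0 : Fin d), v j ^ 2
          ≤ ∑ _j ∈ Finset.univ.erase (0 : Fin d), s/d := by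
            apply Finset.sum_le_sum
            intro j hj
            exact hvj j (Finset.mem_erase.1 hj).1
        _ = ((d:ℝ)-1) * (s/d) := by
            rw [Finset.sum_const, Finset.card_erase_of_mem (Finset.mem_univ _),
              Finset.card_univ, Fintype.card_fin, nsmul_eq_mul, Nat.cast_sub hd1]
            push_cast; ring
        _ ≤ s := by
            have h1 : ((d:ℝ)-1) * (s/d) ≤ (d:ℝ) * (s/d) :=
              mul_le_mul_of_nonneg_right (by linarith) (by positivity)
            have h2 : (d:ℝ) * (s/d) = s := by field_simp
            linarith
    have hsum_tot : ∑ j, v j ^ 2 ≤ 3/4 := by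
      rw [← Finset.add_sum_erase Finset.univ _ (Finset.mem_univ (0 : Fin d))]
      linarith
    refine ⟨gr d 1 1 v, ⟨gr_mem_sphere (by norm_num) (by linarith), ?_⟩, ?_⟩
    · -- band membership
      have h10 : (1 : Fin (d+1)).succAbove (0 : Fin d) = (0 : Fin (d+1)) := by
        apply Fin.succAbove_of_castSucc_lt
        rw [Fin.lt_def]
        simp [Fin.val_one', Nat.mod_eq_of_lt (by omega : 1 < d + 1)]
      show 1 - s ≤ qa d (gr d 1 1 v)
      unfold qa
      have hx0 : gr d 1 1 v 0 = v 0 := by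
        rw [← h10, gr_apply_succAbove]
      have hx1 : gr d 1 1 v 1 ^ 2 = 1 - ∑ j, v j ^ 2 := by
        rw [gr_apply_same, one_mul, Real.sq_sqrt (by linarith)]
      rw [hx0, hx1, ← Finset.add_sum_erase Finset.univ _ (Finset.mem_univ (0 : Fin d))]
      linarith
    · -- projection identity
      funext j
      exact gr_apply_succAbove d 1 1 v j
  have hKone : μH[(d:ℝ)] (proj d '' ABand d s) ≤ μH[(d:ℝ)] (ABand d s) := by
    have := (proj_lipschitz d).hausdorffMeasure_image_le hdd (ABand d s)
    simpa using this
  refine le_trans ?_ (le_trans (measure_mono hbox_sub) hKone)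
  rw [haus_box]
  rw [prod_ofReal_box d hd1 (1/2) (Real.sqrt (s/d))]
  rw [← ENNReal.ofReal_pow (by positivity), ← ENNReal.ofReal_mul (by norm_num)]
  apply ENNReal.ofReal_le_ofReal
  have hexp : (2*Real.sqrt (s/d))^(d-1) = 2^(d-1) * (s/d) ^ β := by
    rw [mul_pow, sqrt_pow_eq_rpow hd1 hsd0]
  have hrw : (s/d) ^ β = ((1:ℝ)/d)^β * s ^ β := by
    rw [show s/(d:ℝ) = (1/(d:ℝ)) * s by ring, Real.mul_rpow (by positivity) hs.le]
  calc 2^(d-1) * ((1:ℝ)/d)^β * s ^ β = 1 * (2^(d-1) * (s/d) ^ β) := by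
        rw [hrw]; ring
    _ ≤ 2*(1/2) * ((2*Real.sqrt (s/d))^(d-1)) := by
        rw [hexp]; norm_num

/-! ### transfer to the sphere subtype -/

noncomputable def qs (d : ℕ) (x : Metric.sphere (0 : EuclideanSpace ℝ (Fin (d+1))) 1) : ℝ :=
  qa d (x : EuclideanSpace ℝ (Fin (d+1)))

def SBand (d : ℕ) (s : ℝ) : Set (Metric.sphere (0 : EuclideanSpace ℝ (Fin (d+1))) 1) :=
  {x | 1 - s ≤ qs d x}

lemma continuous_coord (d : ℕ) (i : Fin (d+1)) :
    Continuous (fun x : Metric.sphere (0 : EuclideanSpace ℝ (Fin (d+1))) 1 =>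
      (x : EuclideanSpace ℝ (Fin (d+1))) i) :=
  (EuclideanSpace.proj i).continuous.comp continuous_subtype_val

lemma continuous_qs (d : ℕ) : Continuous (qs d) := by
  unfold qs qa
  exact ((continuous_coord d 0).pow 2).add ((continuous_coord d 1).pow 2)

lemma measurableSet_sband (d : ℕ) (s : ℝ) : MeasurableSet (SBand d s) :=
  measurableSet_le measurable_const (continuous_qs d).measurable

lemma coe_image_sband (d : ℕ) (s : ℝ) : (Subtype.val '' SBand d s) = ABand d s := by
  ext y
  constructor
  · rintro ⟨⟨y', hy'⟩, hq, rfl⟩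
    exact ⟨hy', hq⟩
  · rintro ⟨hy, hq⟩
    exact ⟨⟨y, hy⟩, hq, rfl⟩

lemma sband_meas (d : ℕ) (s : ℝ) : sphMeas d (SBand d s) = μH[(d:ℝ)] (ABand d s) := by
  rw [show sphMeas d = (μH[(d:ℝ)] :
    Measure (Metric.sphere (0 : EuclideanSpace ℝ (Fin (d+1))) 1)) from rfl]
  rw [← coe_image_sband d s]
  exact (isometry_subtype_coe.hausdorffMeasure_image (Or.inl (Nat.cast_nonneg d)) _).symm

lemma qs_nonneg (d : ℕ) (x : Metric.sphere (0 : EuclideanSpace ℝ (Fin (d+1))) 1) :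
    0 ≤ qs d x := qa_nonneg d _

lemma qs_le_one {d : ℕ} (hd : 1 ≤ d) (x : Metric.sphere (0 : EuclideanSpace ℝ (Fin (d+1))) 1) :
    qs d x ≤ 1 := qa_le_one hd x.2

lemma sband_upper (d : ℕ) (hd : 2 ≤ d) : ∃ b : ℝ, 1 ≤ b ∧ ∀ s : ℝ, 0 < s →
    sphMeas d (SBand d s) ≤ ENNReal.ofReal (b * s ^ (((d:ℝ)-1)/2)) := by
  obtain ⟨b, hb1, hb⟩ := aband_meas_upper d hd
  exact ⟨b, hb1, fun s hs => by rw [sband_meas]; exact hb s hs⟩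

lemma sband_lower (d : ℕ) (hd : 2 ≤ d) : ∃ a : ℝ, 0 < a ∧ ∀ s : ℝ, 0 < s → s ≤ 1/2 →
    ENNReal.ofReal (a * s ^ (((d:ℝ)-1)/2)) ≤ sphMeas d (SBand d s) := by
  obtain ⟨a, ha0, ha⟩ := aband_meas_lower d hd
  exact ⟨a, ha0, fun s hs hs2 => by rw [sband_meas]; exact ha s hs hs2⟩

/-! ### the moment integrals -/

noncomputable def Jint (d : ℕ) (m : ℕ) : ℝ≥0∞ :=
  ∫⁻ x, (ENNReal.ofReal (qs d x))^m ∂ sphMeas d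

lemma Jint_lower (d : ℕ) (hd : 2 ≤ d) : ∃ ja : ℝ, 0 < ja ∧ ∀ m : ℕ, 1 ≤ m →
    ENNReal.ofReal (ja * (m:ℝ) ^ (-(((d:ℝ)-1)/2))) ≤ Jint d m := by
  obtain ⟨a, ha0, ha⟩ := sband_lower d hd
  set β := ((d:ℝ)-1)/2 with hβdef
  refine ⟨a/2 * (1/2:ℝ)^β, by positivity, ?_⟩
  intro m hm
  have hm0 : (0:ℝ) < m := by exact_mod_cast (by omega : 0 < m)
  have hm1 : (1:ℝ) ≤ m := by exact_mod_cast hm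
  have hs0 : (0:ℝ) < 1/(2*(m:ℝ)) := by positivity
  have hs2 : 1/(2*(m:ℝ)) ≤ 1/2 := by
    rw [div_le_div_iff₀ (by positivity) (by norm_num)]
    nlinarith
  have hpt : ∀ x, Set.indicator (SBand d (1/(2*(m:ℝ)))) (fun _ => ENNReal.ofReal (1/2)) x
      ≤ (ENNReal.ofReal (qs d x))^m := by
    intro x
    by_cases hx : x ∈ SBand d (1/(2*(m:ℝ)))
    · rw [Set.indicator_of_mem hx]
      have hq : 1 - 1/(2*(m:ℝ)) ≤ qs d x := hx
      have hq0 : (0:ℝ) ≤ 1 - 1/(2*(m:ℝ)) := by linarith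
      rw [← ENNReal.ofReal_pow (qs_nonneg d x)]
      apply ENNReal.ofReal_le_ofReal
      have h1 : 1 + (m:ℝ) * (-(1/(2*(m:ℝ)))) ≤ (1 + (-(1/(2*(m:ℝ)))))^m :=
        one_add_mul_le_pow (by nlinarith) m
      have h2 : 1 + (m:ℝ) * (-(1/(2*(m:ℝ)))) = 1/2 := by field_simp; ring
      have h3 : (1 + (-(1/(2*(m:ℝ))))) = 1 - 1/(2*(m:ℝ)) := by ring
      rw [h2, h3] at h1
      calc (1/2 : ℝ) ≤ (1 - 1/(2*(m:ℝ)))^m := h1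
        _ ≤ qs d x ^ m := pow_le_pow_left₀ hq0 hq m
    · rw [Set.indicator_of_notMem hx]
      exact zero_le
  have hint : ENNReal.ofReal (1/2) * sphMeas d (SBand d (1/(2*(m:ℝ)))) ≤ Jint d m := by
    rw [← setLIntegral_const, ← lintegral_indicator (measurableSet_sband d _)]
    exact lintegral_mono hpt
  refine le_trans ?_ hint
  refine le_trans ?_ (mul_le_mul_right (ha _ hs0 hs2) _)
  rw [← ENNReal.ofReal_mul (by norm_num)]
  apply ENNReal.ofReal_le_ofReal
  have hrw : (1/(2*(m:ℝ)))^β = (1/2:ℝ)^β * (m:ℝ)^(-β) := by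
    have hinv : ((1:ℝ)/(m:ℝ))^β = (m:ℝ)^(-β) := by
      rw [one_div, Real.inv_rpow hm0.le, ← Real.rpow_neg hm0.le]
    rw [show (1/(2*(m:ℝ))) = (1/2) * (1/(m:ℝ)) by field_simp,
      Real.mul_rpow (by norm_num) (by positivity), hinv]
  rw [hrw]
  calc a/2 * (1/2:ℝ)^β * (m:ℝ)^(-β) = 1/2 * (a * ((1/2:ℝ)^β * (m:ℝ)^(-β))) := by ring
    _ ≤ 1/2 * (a * ((1/2:ℝ)^β * (m:ℝ)^(-β))) := le_refl _

set_option maxHeartbeats 2000000 in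
lemma Jint_upper (d : ℕ) (hd : 2 ≤ d) : ∃ jb : ℝ, 1 ≤ jb ∧ ∀ m : ℕ, 1 ≤ m →
    Jint d m ≤ ENNReal.ofReal (jb * (m:ℝ) ^ (-(((d:ℝ)-1)/2))) := by
  obtain ⟨b, hb1, hb⟩ := sband_upper d hd
  set β := ((d:ℝ)-1)/2 with hβdef
  have hβ0 : (0:ℝ) ≤ β := by
    have : (2:ℝ) ≤ (d:ℝ) := by exact_mod_cast hd
    rw [hβdef]; linarith
  have hβd : β ≤ (d:ℝ) := by
    have h0 : (0:ℝ) ≤ (d:ℝ) := Nat.cast_nonneg d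
    rw [hβdef]; linarith
  -- summability of the comparison series
  have hsum : Summable (fun k : ℕ => (1/2:ℝ)^k * ((k:ℝ)+1)^d) := by
    have h1 : Summable (fun n : ℕ => (n:ℝ)^d * (1/2:ℝ)^n) := by
      apply summable_pow_mul_geometric_of_norm_lt_one
      rw [Real.norm_eq_abs, abs_lt]
      constructor <;> norm_num
    have h2 : Summable (fun n : ℕ => ((n+1:ℕ):ℝ)^d * (1/2:ℝ)^(n+1)) :=
      (summable_nat_add_iff 1).2 h1
    apply (h2.mul_left 2).congr
    intro k
    push_cast
    ring
  set S : ℝ := ∑' k : ℕ, (1/2:ℝ)^k * ((k:ℝ)+1)^d with hS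
  have hS1 : 1 ≤ S := by
    have h := Summable.le_tsum hsum 0 (fun i _ => by positivity)
    simp only [pow_zero, Nat.cast_zero, zero_add, one_pow, one_mul] at h
    exact h
  have hS0 : (0:ℝ) ≤ S := by linarith
  refine ⟨b * S, by nlinarith, ?_⟩
  intro m hm
  have hm0 : (0:ℝ) < m := by exact_mod_cast (by omega : 0 < m)
  -- pointwise domination
  have hpt : ∀ x, (ENNReal.ofReal (qs d x))^m ≤
      ∑' k : ℕ, Set.indicator (SBand d (((k:ℝ)+1)/m))
        (fun _ => ENNReal.ofReal ((1/2:ℝ)^k)) x := by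
    intro x
    have hq0 := qs_nonneg d x
    have hq1 := qs_le_one (by omega : 1 ≤ d) x
    set k := ⌊(m:ℝ)*(1 - qs d x)⌋₊ with hk
    have hknn : (0:ℝ) ≤ (m:ℝ)*(1-qs d x) := by nlinarith
    have hfl : (k:ℝ) ≤ (m:ℝ)*(1-qs d x) := Nat.floor_le hknn
    have hfl2 : (m:ℝ)*(1-qs d x) < (k:ℝ)+1 := Nat.lt_floor_add_one _
    have hx_mem : x ∈ SBand d (((k:ℝ)+1)/m) := by
      show 1 - ((k:ℝ)+1)/m ≤ qs d x
      have h1 : 1 - qs d x < ((k:ℝ)+1)/m := by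
        rw [lt_div_iff₀ hm0]
        nlinarith
      linarith
    have hval : (ENNReal.ofReal (qs d x))^m ≤ ENNReal.ofReal ((1/2:ℝ)^k) := by
      rw [← ENNReal.ofReal_pow hq0]
      apply ENNReal.ofReal_le_ofReal
      have hqk : qs d x ≤ 1 - (k:ℝ)/m := by
        have h1 : (k:ℝ)/m ≤ 1 - qs d x := by
          rw [div_le_iff₀ hm0]
          nlinarith
        linarith
      have hk1 : (0:ℝ) ≤ 1 - (k:ℝ)/m := le_trans hq0 hqk
      have hexpk : (0:ℝ) ≤ Real.exp (-((k:ℝ)/m)) := (Real.exp_pos _).le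
      calc qs d x ^ m ≤ (1 - (k:ℝ)/m)^m := pow_le_pow_left₀ hq0 hqk m
        _ ≤ Real.exp (-((k:ℝ)/m))^m := by
            apply pow_le_pow_left₀ hk1 ?_ m
            have := Real.add_one_le_exp (-((k:ℝ)/m))
            linarith
        _ = Real.exp (-(k:ℝ)) := by
            rw [← Real.exp_nat_mul]
            congr 1
            field_simp
        _ = Real.exp (-1) ^ k := by
            rw [← Real.exp_nat_mul]
            congr 1
            ring
        _ ≤ (1/2:ℝ)^k := by
            apply pow_le_pow_left₀ (Real.exp_pos _).le ?_ k
            rw [Real.exp_neg]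
            have h2e : (2:ℝ) ≤ Real.exp 1 := by
              have := Real.add_one_le_exp 1
              linarith
            rw [one_div]
            exact inv_anti₀ (by norm_num) h2e
    refine le_trans hval ?_
    have heq : Set.indicator (SBand d (((k:ℝ)+1)/m))
        (fun _ => ENNReal.ofReal ((1/2:ℝ)^k)) x = ENNReal.ofReal ((1/2:ℝ)^k) :=
      Set.indicator_of_mem hx_mem _
    rw [← heq]
    exact ENNReal.le_tsum k
  have hmeas : ∀ k : ℕ, AEMeasurable (Set.indicator (SBand d (((k:ℝ)+1)/m))
      (fun _ => ENNReal.ofReal ((1/2:ℝ)^k))) (sphMeas d) := fun k =>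
    (measurable_const.indicator (measurableSet_sband d _)).aemeasurable
  calc Jint d m ≤ ∫⁻ x, ∑' k : ℕ, Set.indicator (SBand d (((k:ℝ)+1)/m))
        (fun _ => ENNReal.ofReal ((1/2:ℝ)^k)) x ∂ sphMeas d := lintegral_mono hpt
    _ = ∑' k : ℕ, ∫⁻ x, Set.indicator (SBand d (((k:ℝ)+1)/m))
        (fun _ => ENNReal.ofReal ((1/2:ℝ)^k)) x ∂ sphMeas d := lintegral_tsum hmeas
    _ = ∑' k : ℕ, ENNReal.ofReal ((1/2:ℝ)^k) * sphMeas d (SBand d (((k:ℝ)+1)/m)) := by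
        apply tsum_congr
        intro k
        rw [lintegral_indicator (measurableSet_sband d _), setLIntegral_const]
    _ ≤ ∑' k : ℕ, ENNReal.ofReal ((b * (m:ℝ)^(-β)) * ((1/2:ℝ)^k * ((k:ℝ)+1)^d)) := by
        apply ENNReal.tsum_le_tsum
        intro k
        have hskpos : (0:ℝ) < ((k:ℝ)+1)/m := by positivity
        refine le_trans (mul_le_mul_right (hb _ hskpos) _) ?_
        rw [← ENNReal.ofReal_mul (by positivity)]
        apply ENNReal.ofReal_le_ofReal
        have hrpow : (((k:ℝ)+1)/m)^β = ((k:ℝ)+1)^β * (m:ℝ)^(-β) := by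
          rw [Real.div_rpow (by positivity) hm0.le, Real.rpow_neg hm0.le, div_eq_mul_inv]
        have hkd : ((k:ℝ)+1)^β ≤ ((k:ℝ)+1)^(d:ℕ) := by
          rw [← Real.rpow_natCast ((k:ℝ)+1) d]
          exact Real.rpow_le_rpow_of_exponent_le (by linarith [Nat.cast_nonneg (α := ℝ) k]) hβd
        have hmβ : (0:ℝ) ≤ (m:ℝ)^(-β) := Real.rpow_nonneg hm0.le _
        calc (1/2:ℝ)^k * (b * (((k:ℝ)+1)/m)^β)
            = b * (m:ℝ)^(-β) * ((1/2:ℝ)^k * ((k:ℝ)+1)^β) := by rw [hrpow]; ring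
          _ ≤ b * (m:ℝ)^(-β) * ((1/2:ℝ)^k * ((k:ℝ)+1)^(d:ℕ)) := by
              apply mul_le_mul_of_nonneg_left ?_ (by positivity)
              apply mul_le_mul_of_nonneg_left hkd (by positivity)
    _ = ENNReal.ofReal (b * (m:ℝ)^(-β)) * ∑' k : ℕ, ENNReal.ofReal ((1/2:ℝ)^k * ((k:ℝ)+1)^d) := by
        rw [← ENNReal.tsum_mul_left]
        apply tsum_congr
        intro k
        rw [← ENNReal.ofReal_mul (by positivity)]
    _ = ENNReal.ofReal (b * (m:ℝ)^(-β)) * ENNReal.ofReal S := by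
        congr 1
        rw [hS, ENNReal.ofReal_tsum_of_nonneg (fun k => by positivity) hsum]
    _ = ENNReal.ofReal (b * S * (m:ℝ)^(-β)) := by
        rw [← ENNReal.ofReal_mul (by positivity)]
        congr 1
        ring

/-! ### pointwise identities for `Yhw` -/

lemma norm_z_sq (d : ℕ) (x : Metric.sphere (0 : EuclideanSpace ℝ (Fin (d+1))) 1) :
    ‖(((x : EuclideanSpace ℝ (Fin (d+1))) 0 : ℂ)
      + Complex.I * ((x : EuclideanSpace ℝ (Fin (d+1))) 1 : ℂ))‖^2 = qs d x := by
  have h : (((x : EuclideanSpace ℝ (Fin (d+1))) 0 : ℂ)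
      + Complex.I * ((x : EuclideanSpace ℝ (Fin (d+1))) 1 : ℂ))
      = (((x : EuclideanSpace ℝ (Fin (d+1))) 0 : ℝ) : ℂ)
        + (((x : EuclideanSpace ℝ (Fin (d+1))) 1 : ℝ) : ℂ) * Complex.I := by ring
  rw [h, Complex.norm_add_mul_I, Real.sq_sqrt (by positivity)]
  rfl

lemma yhw_pt (d : ℕ) (cc : ℝ) (n : ℕ)
    (x : Metric.sphere (0 : EuclideanSpace ℝ (Fin (d+1))) 1) :
    ((‖Yhw d cc n x‖₊ : ℝ≥0∞))^2 = ENNReal.ofReal (cc^2) * (ENNReal.ofReal (qs d x))^n := by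
  rw [← ENNReal.ofReal_coe_nnreal, coe_nnnorm, ← ENNReal.ofReal_pow (norm_nonneg _),
    ← ENNReal.ofReal_pow (qs_nonneg d x), ← ENNReal.ofReal_mul (by positivity)]
  congr 1
  unfold Yhw
  rw [norm_mul, mul_pow, norm_pow]
  rw [← pow_mul, mul_comm n 2, pow_mul, norm_z_sq]
  congr 1
  rw [Complex.norm_real, Real.norm_eq_abs, sq_abs]

lemma yhw_lint (d : ℕ) (cc : ℝ) (n : ℕ) :
    ∫⁻ x, ((‖Yhw d cc n x‖₊ : ℝ≥0∞))^2 ∂ sphMeas d = ENNReal.ofReal (cc^2) * Jint d n := by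
  rw [lintegral_congr (yhw_pt d cc n)]
  exact lintegral_const_mul' _ _ ENNReal.ofReal_ne_top

lemma prod_yhw_lint {d α : ℕ} (nn : Fin α → ℕ) (cs : Fin α → ℝ) :
    ∫⁻ x, ((‖∏ i, Yhw d (cs i) (nn i) x‖₊ : ℝ≥0∞))^2 ∂ sphMeas d
      = ENNReal.ofReal ((∏ i, cs i)^2) * Jint d (∑ i, nn i) := by
  have hpt : ∀ x, ∏ i, Yhw d (cs i) (nn i) x = Yhw d (∏ i, cs i) (∑ i, nn i) x := by
    intro x
    unfold Yhw
    rw [Finset.prod_mul_distrib, Finset.prod_pow_eq_pow_sum]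
    push_cast
    ring
  rw [lintegral_congr (fun x => by rw [hpt x])]
  exact yhw_lint d _ _

/-! ### the caps for `Ytil` -/

def Ecap (d m : ℕ) : Set (Metric.sphere (0 : EuclideanSpace ℝ (Fin (d+1))) 1) :=
  {x | Real.arccos (Real.sqrt (((x : EuclideanSpace ℝ (Fin (d+1))) 0) ^ 2
        + ((x : EuclideanSpace ℝ (Fin (d+1))) 1) ^ 2)) ≤ 1 / Real.sqrt m}

lemma mem_ecap_iff (d m : ℕ) (x : Metric.sphere (0 : EuclideanSpace ℝ (Fin (d+1))) 1) :
    x ∈ Ecap d m ↔ Real.arccos (Real.sqrt (qs d x)) ≤ 1 / Real.sqrt m := Iff.rfl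

lemma measurableSet_ecap (d m : ℕ) : MeasurableSet (Ecap d m) := by
  have hcont : Continuous (fun x : Metric.sphere (0 : EuclideanSpace ℝ (Fin (d+1))) 1 =>
      Real.arccos (Real.sqrt (qs d x))) :=
    Real.continuous_arccos.comp (Real.continuous_sqrt.comp (continuous_qs d))
  exact measurableSet_le hcont.measurable measurable_const

lemma arccos_le_of_cos_le {v t : ℝ} (hv1 : v ≤ 1) (ht0 : 0 ≤ t) (htpi : t ≤ Real.pi)
    (h : Real.cos t ≤ v) : Real.arccos v ≤ t := by
  by_contra hcon
  push_neg at hcon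
  have hv1' : -1 ≤ v := le_trans (Real.neg_one_le_cos t) h
  have h2 := Real.strictAntiOn_cos ⟨ht0, htpi⟩
    ⟨Real.arccos_nonneg v, Real.arccos_le_pi v⟩ hcon
  rw [Real.cos_arccos hv1' hv1] at h2
  linarith

lemma sqrtm_facts {m : ℕ} (hm : 1 ≤ m) :
    0 < 1/Real.sqrt m ∧ 1/Real.sqrt m ≤ 1 ∧ (1/Real.sqrt m)^2 = 1/m := by
  have hm0 : (0:ℝ) < m := by exact_mod_cast (by omega : 0 < m)
  have hm1 : (1:ℝ) ≤ m := by exact_mod_cast hm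
  have h1 : (1:ℝ) ≤ Real.sqrt m := (Real.le_sqrt (by norm_num) hm0.le).2 (by nlinarith)
  refine ⟨by positivity, ?_, ?_⟩
  · rw [div_le_one (by positivity)]
    exact h1
  · rw [div_pow, one_pow, Real.sq_sqrt hm0.le]

lemma cos_sqrtm_bounds {m : ℕ} (hm : 1 ≤ m) :
    1 - (53/96)*(1/(m:ℝ)) ≤ Real.cos (1/Real.sqrt m) ∧
      Real.cos (1/Real.sqrt m) ≤ 1 - (1/3)*(1/(m:ℝ)) := by
  obtain ⟨ht0, ht1, ht2⟩ := sqrtm_facts hm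
  set t := 1/Real.sqrt m with htdef
  have hm0 : (0:ℝ) < m := by exact_mod_cast (by omega : 0 < m)
  have hm1 : (1:ℝ) ≤ m := by exact_mod_cast hm
  have hu1 : 1/(m:ℝ) ≤ 1 := by rw [div_le_one hm0]; exact hm1
  have hu0 : (0:ℝ) < 1/(m:ℝ) := by positivity
  have hcb := Real.cos_bound (x := t) (by rw [abs_of_pos ht0]; exact ht1)
  rw [abs_of_pos ht0] at hcb
  have habs := abs_le.1 hcb
  have ht4 : t^4 = (1/(m:ℝ))^2 := by
    rw [show t^4 = (t^2)^2 by ring, ht2]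
  rw [ht2] at habs
  rw [ht4] at habs
  constructor
  · nlinarith [habs.1, habs.2, sq_nonneg (1/(m:ℝ))]
  · nlinarith [habs.1, habs.2, sq_nonneg (1/(m:ℝ))]

lemma ecap_subset_sband (d : ℕ) (hd : 2 ≤ d) {m : ℕ} (hm : 1 ≤ m) :
    Ecap d m ⊆ SBand d (2/(m:ℝ)) := by
  intro x hx
  obtain ⟨ht0, ht1, ht2⟩ := sqrtm_facts hm
  obtain ⟨hcg, hcl⟩ := cos_sqrtm_bounds hm
  rw [mem_ecap_iff] at hx
  have hm0 : (0:ℝ) < m := by exact_mod_cast (by omega : 0 < m)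
  have hm1 : (1:ℝ) ≤ m := by exact_mod_cast hm
  have hu1 : 1/(m:ℝ) ≤ 1 := by rw [div_le_one hm0]; exact hm1
  have hu0 : (0:ℝ) < 1/(m:ℝ) := by positivity
  have hq0 := qs_nonneg d x
  have hq1 : qs d x ≤ 1 := qs_le_one (by omega) x
  have hsq1 : Real.sqrt (qs d x) ≤ 1 := Real.sqrt_le_one.2 hq1
  have hcos0 : 0 ≤ Real.cos (1/Real.sqrt m) := by nlinarith [hcg]
  have hcost_le : Real.cos (1/Real.sqrt m) ≤ Real.sqrt (qs d x) := by
    have h2 := Real.cos_le_cos_of_nonneg_of_le_pi (Real.arccos_nonneg _)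
      (le_trans ht1 (by linarith [Real.pi_gt_three])) hx
    rwa [Real.cos_arccos (by linarith [Real.sqrt_nonneg (qs d x)]) hsq1] at h2
  have hsq : Real.cos (1/Real.sqrt m) ^ 2 ≤ qs d x := by
    calc Real.cos (1/Real.sqrt m) ^ 2 ≤ Real.sqrt (qs d x) ^ 2 :=
          pow_le_pow_left₀ hcos0 hcost_le 2
      _ = qs d x := Real.sq_sqrt hq0
  show 1 - 2/(m:ℝ) ≤ qs d x
  have h2u : 2/(m:ℝ) = 2*(1/(m:ℝ)) := by ring
  rw [h2u]
  nlinarith [hcg, hsq, hcos0, sq_nonneg (1/(m:ℝ))]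

lemma sband_subset_ecap (d : ℕ) (hd : 2 ≤ d) {m : ℕ} (hm : 1 ≤ m) :
    SBand d (1/(3*(m:ℝ))) ⊆ Ecap d m := by
  intro x hx
  obtain ⟨ht0, ht1, ht2⟩ := sqrtm_facts hm
  obtain ⟨hcg, hcl⟩ := cos_sqrtm_bounds hm
  have hm0 : (0:ℝ) < m := by exact_mod_cast (by omega : 0 < m)
  have hm1 : (1:ℝ) ≤ m := by exact_mod_cast hm
  have hu1 : 1/(m:ℝ) ≤ 1 := by rw [div_le_one hm0]; exact hm1
  have hu0 : (0:ℝ) < 1/(m:ℝ) := by positivity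
  have hq0 := qs_nonneg d x
  have hq1 : qs d x ≤ 1 := qs_le_one (by omega) x
  have hq : 1 - (1/3)*(1/(m:ℝ)) ≤ qs d x := by
    have h1 : 1 - 1/(3*(m:ℝ)) ≤ qs d x := hx
    have h2 : 1/(3*(m:ℝ)) = (1/3)*(1/(m:ℝ)) := by ring
    linarith [h2 ▸ h1]
  rw [mem_ecap_iff]
  apply arccos_le_of_cos_le (Real.sqrt_le_one.2 hq1) ht0.le
    (le_trans ht1 (by linarith [Real.pi_gt_three]))
  have hnn : (0:ℝ) ≤ 1 - (1/3)*(1/(m:ℝ)) := by nlinarith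
  have hsqge : 1 - (1/3)*(1/(m:ℝ)) ≤ Real.sqrt (qs d x) := by
    apply (Real.le_sqrt hnn hq0).2
    nlinarith [hq, hu0, hu1]
  linarith [hcl, hsqge]

lemma ecap_meas_upper (d : ℕ) (hd : 2 ≤ d) : ∃ bE : ℝ, 1 ≤ bE ∧ ∀ m : ℕ, 1 ≤ m →
    sphMeas d (Ecap d m) ≤ ENNReal.ofReal (bE * (m:ℝ)^(-(((d:ℝ)-1)/2))) := by
  obtain ⟨b, hb1, hb⟩ := sband_upper d hd
  set β := ((d:ℝ)-1)/2 with hβdef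
  have hβ0 : (0:ℝ) ≤ β := by
    have : (2:ℝ) ≤ (d:ℝ) := by exact_mod_cast hd
    rw [hβdef]; linarith
  have h2β : (1:ℝ) ≤ 2^β := by
    calc (1:ℝ) = 2^(0:ℝ) := (Real.rpow_zero 2).symm
      _ ≤ 2^β := Real.rpow_le_rpow_of_exponent_le (by norm_num) hβ0
  refine ⟨b * 2^β, by nlinarith, ?_⟩
  intro m hm
  have hm0 : (0:ℝ) < m := by exact_mod_cast (by omega : 0 < m)
  calc sphMeas d (Ecap d m) ≤ sphMeas d (SBand d (2/(m:ℝ))) :=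
        measure_mono (ecap_subset_sband d hd hm)
    _ ≤ ENNReal.ofReal (b * (2/(m:ℝ))^β) := hb _ (by positivity)
    _ = ENNReal.ofReal (b * 2^β * (m:ℝ)^(-β)) := by
        congr 1
        rw [Real.div_rpow (by norm_num) hm0.le, Real.rpow_neg hm0.le]
        ring

lemma ecap_meas_lower (d : ℕ) (hd : 2 ≤ d) : ∃ aE : ℝ, 0 < aE ∧ ∀ m : ℕ, 1 ≤ m →
    ENNReal.ofReal (aE * (m:ℝ)^(-(((d:ℝ)-1)/2))) ≤ sphMeas d (Ecap d m) := by
  obtain ⟨a, ha0, ha⟩ := sband_lower d hd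
  set β := ((d:ℝ)-1)/2 with hβdef
  refine ⟨a * (1/3:ℝ)^β, by positivity, ?_⟩
  intro m hm
  have hm0 : (0:ℝ) < m := by exact_mod_cast (by omega : 0 < m)
  have hm1 : (1:ℝ) ≤ m := by exact_mod_cast hm
  have hs0 : (0:ℝ) < 1/(3*(m:ℝ)) := by positivity
  have hs2 : 1/(3*(m:ℝ)) ≤ 1/2 := by
    rw [div_le_div_iff₀ (by positivity) (by norm_num)]
    nlinarith
  calc ENNReal.ofReal (a * (1/3:ℝ)^β * (m:ℝ)^(-β))
      = ENNReal.ofReal (a * (1/(3*(m:ℝ)))^β) := by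
        congr 1
        have hinv : ((1:ℝ)/(m:ℝ))^β = (m:ℝ)^(-β) := by
          rw [one_div, Real.inv_rpow hm0.le, ← Real.rpow_neg hm0.le]
        rw [show (1/(3*(m:ℝ))) = (1/3) * (1/(m:ℝ)) by ring,
          Real.mul_rpow (by norm_num) (by positivity), hinv]
        ring
    _ ≤ sphMeas d (SBand d (1/(3*(m:ℝ)))) := ha _ hs0 hs2
    _ ≤ sphMeas d (Ecap d m) := measure_mono (sband_subset_ecap d hd hm)

lemma ytil_lint {d α : ℕ} (nn : Fin α → ℕ) (hpos : ∀ i, 1 ≤ nn i)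
    (i0 : Fin α) (hmax : ∀ i, nn i ≤ nn i0) :
    ∫⁻ x, ((‖∏ i, Ytil d (nn i) x‖₊ : ℝ≥0∞))^2 ∂ sphMeas d
      = ENNReal.ofReal (∏ i, ((nn i : ℝ)) ^ (((d:ℝ)-1)/2)) * sphMeas d (Ecap d (nn i0)) := by
  have hpt : ∀ x, ((‖∏ i, Ytil d (nn i) x‖₊ : ℝ≥0∞))^2
      = Set.indicator (Ecap d (nn i0))
          (fun _ => ENNReal.ofReal (∏ i, ((nn i : ℝ)) ^ (((d:ℝ)-1)/2))) x := by
    intro x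
    by_cases hx : x ∈ Ecap d (nn i0)
    · rw [Set.indicator_of_mem hx]
      have hcond : ∀ i : Fin α,
          Real.arccos (Real.sqrt (((x : EuclideanSpace ℝ (Fin (d+1))) 0) ^ 2
            + ((x : EuclideanSpace ℝ (Fin (d+1))) 1) ^ 2)) ≤ 1 / Real.sqrt (nn i) := by
        intro i
        refine le_trans hx ?_
        apply one_div_le_one_div_of_le
        · have h1 : (0:ℕ) < nn i := hpos i
          have h2 : (0:ℝ) < (nn i : ℝ) := by exact_mod_cast h1
          exact Real.sqrt_pos.2 h2
        · exact Real.sqrt_le_sqrt (by exact_mod_cast hmax i)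
      have hprodeq : ∏ i, Ytil d (nn i) x = ∏ i, ((nn i:ℝ)) ^ (((d:ℝ)-1)/4) := by
        apply Finset.prod_congr rfl
        intro i _
        unfold Ytil
        rw [if_pos (hcond i)]
      rw [hprodeq, ← ENNReal.ofReal_coe_nnreal, coe_nnnorm, ← ENNReal.ofReal_pow (norm_nonneg _)]
      congr 1
      rw [Real.norm_eq_abs, sq_abs, ← Finset.prod_pow]
      apply Finset.prod_congr rfl
      intro i _
      rw [← Real.rpow_natCast (((nn i:ℝ)) ^ (((d:ℝ)-1)/4)) 2, ← Real.rpow_mul (Nat.cast_nonneg _)]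
      congr 1
      push_cast
      ring
    · rw [Set.indicator_of_notMem hx]
      have h0 : Ytil d (nn i0) x = 0 := by
        unfold Ytil
        rw [if_neg]
        exact fun h => hx h
      rw [Finset.prod_eq_zero (Finset.mem_univ i0) h0]
      simp
  rw [lintegral_congr hpt, lintegral_indicator (measurableSet_ecap d _), setLIntegral_const]

lemma rpow_neg_antitone {x y β : ℝ} (hx : 0 < x) (hxy : x ≤ y) (hβ : 0 ≤ β) :
    y^(-β) ≤ x^(-β) := by
  rw [Real.rpow_neg hx.le, Real.rpow_neg (le_trans hx.le hxy)]
  exact inv_anti₀ (Real.rpow_pos_of_pos hx β) (Real.rpow_le_rpow hx.le hxy hβ)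


set_option maxHeartbeats 2000000 in
theorem main_aux (d : ℕ) (hd : 2 ≤ d) (c : ℕ → ℝ)
    (hc : ∀ n : ℕ, 1 ≤ n → 0 < c n ∧
      ∫⁻ x, ((‖Yhw d (c n) n x‖₊ : ℝ≥0∞)) ^ 2 ∂(sphMeas d) = 1)
    (α : ℕ) (hα : 2 ≤ α) :
    ∃ C : ℝ, 1 ≤ C ∧
      ∀ (i0 : Fin α), (∀ j, i0 ≤ j) →
      ∀ nn : Fin α → ℕ, (∀ i, 1 ≤ nn i) → (∀ i j : Fin α, i ≤ j → nn j ≤ nn i) →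
        ((ENNReal.ofReal
            ((∏ i ∈ Finset.univ.erase i0, (nn i : ℝ)) ^ (((d : ℝ) - 1) / 2) / C)
          ≤ ∫⁻ x, ((‖∏ i, Yhw d (c (nn i)) (nn i) x‖₊ : ℝ≥0∞)) ^ 2 ∂(sphMeas d) ∧
        ∫⁻ x, ((‖∏ i, Yhw d (c (nn i)) (nn i) x‖₊ : ℝ≥0∞)) ^ 2 ∂(sphMeas d)
          ≤ ENNReal.ofReal
            (C * (∏ i ∈ Finset.univ.erase i0, (nn i : ℝ)) ^ (((d : ℝ) - 1) / 2)))
        ∧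
        (ENNReal.ofReal
            ((∏ i ∈ Finset.univ.erase i0, (nn i : ℝ)) ^ (((d : ℝ) - 1) / 2) / C)
          ≤ ∫⁻ x, ((‖∏ i, Ytil d (nn i) x‖₊ : ℝ≥0∞)) ^ 2 ∂(sphMeas d) ∧
        ∫⁻ x, ((‖∏ i, Ytil d (nn i) x‖₊ : ℝ≥0∞)) ^ 2 ∂(sphMeas d)
          ≤ ENNReal.ofReal
            (C * (∏ i ∈ Finset.univ.erase i0, (nn i : ℝ)) ^ (((d : ℝ) - 1) / 2)))) := by
  obtain ⟨ja, hja0, hja⟩ := Jint_lower d hd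
  obtain ⟨jb, hjb1, hjb⟩ := Jint_upper d hd
  obtain ⟨bE, hbE1, hbE⟩ := ecap_meas_upper d hd
  obtain ⟨aE, haE0, haE⟩ := ecap_meas_lower d hd
  have hjb0 : (0:ℝ) < jb := by linarith
  set β := ((d:ℝ)-1)/2 with hβdef
  have hβ0 : (0:ℝ) ≤ β := by
    have : (2:ℝ) ≤ (d:ℝ) := by exact_mod_cast hd
    rw [hβdef]; linarith
  have hα0 : (0:ℝ) < (α:ℝ) := by exact_mod_cast (by omega : 0 < α)
  set CU1 : ℝ := ja⁻¹^α * jb with hCU1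
  set CL1 : ℝ := jb^α * ja⁻¹ * (α:ℝ)^β with hCL1
  have hCU1pos : 0 < CU1 := by rw [hCU1]; positivity
  have hCL1pos : 0 < CL1 := by rw [hCL1]; positivity
  have haEipos : 0 < aE⁻¹ := by positivity
  set C : ℝ := 1 + CU1 + CL1 + bE + aE⁻¹ with hCdef
  have hC1 : 1 ≤ C := by rw [hCdef]; nlinarith
  have hCpos : 0 < C := by linarith
  refine ⟨C, hC1, ?_⟩
  intro i0 hi0min nn hnn hmono
  have hmax : ∀ i, nn i ≤ nn i0 := fun i => hmono i0 i (hi0min i)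
  have hn0 : ∀ i, (0:ℝ) < (nn i:ℝ) := fun i => by exact_mod_cast (by
    have := hnn i; omega : 0 < nn i)
  set N : ℕ := ∑ i, nn i with hNdef
  have hN1 : 1 ≤ N := le_trans (hnn i0)
    (Finset.single_le_sum (f := nn) (fun i _ => Nat.zero_le _) (Finset.mem_univ i0))
  have hNge : nn i0 ≤ N :=
    Finset.single_le_sum (f := nn) (fun i _ => Nat.zero_le _) (Finset.mem_univ i0)
  have hNle : N ≤ α * nn i0 := by
    calc N ≤ ∑ _i : Fin α, nn i0 := Finset.sum_le_sum (fun i _ => hmax i)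
      _ = α * nn i0 := by
          rw [Finset.sum_const, Finset.card_univ, Fintype.card_fin, smul_eq_mul]
  set P : ℝ := ∏ i ∈ Finset.univ.erase i0, (nn i : ℝ) with hPdef
  have hP0 : 0 < P := Finset.prod_pos (fun i _ => hn0 i)
  have hPβ0 : (0:ℝ) ≤ P^β := Real.rpow_nonneg hP0.le β
  have hn00 : (0:ℝ) < (nn i0 : ℝ) := hn0 i0
  have hPf : (∏ i, (nn i:ℝ)) = (nn i0:ℝ) * P := by
    rw [hPdef]
    exact (Finset.mul_prod_erase Finset.univ _ (Finset.mem_univ i0)).symm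
  have hprod_rpow : ∏ i, ((nn i:ℝ))^β = (nn i0:ℝ)^β * P^β := by
    rw [Real.finset_prod_rpow _ _ (fun i _ => (hn0 i).le) β, hPf,
      Real.mul_rpow hn00.le hP0.le]
  have hcancel : (nn i0:ℝ)^β * (nn i0:ℝ)^(-β) = 1 := by
    rw [← Real.rpow_add hn00, add_neg_cancel, Real.rpow_zero]
  -- c bounds
  have hcsq : ∀ n : ℕ, 1 ≤ n → ENNReal.ofReal ((c n)^2) = (Jint d n)⁻¹ := by
    intro n hn
    apply ENNReal.eq_inv_of_mul_eq_one_left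
    have h2 := (hc n hn).2
    rwa [yhw_lint d (c n) n] at h2
  have hnn1 : ∀ i, (1:ℝ) ≤ (nn i : ℝ) := fun i => by exact_mod_cast hnn i
  have hcub : ∀ i, ENNReal.ofReal ((c (nn i))^2)
      ≤ ENNReal.ofReal (ja⁻¹ * ((nn i:ℝ))^β) := by
    intro i
    rw [hcsq _ (hnn i)]
    calc (Jint d (nn i))⁻¹ ≤ (ENNReal.ofReal (ja * ((nn i:ℝ))^(-β)))⁻¹ :=
          ENNReal.inv_le_inv' (hja _ (hnn i))
      _ = ENNReal.ofReal ((ja * ((nn i:ℝ))^(-β))⁻¹) :=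
          (ENNReal.ofReal_inv_of_pos (mul_pos hja0 (Real.rpow_pos_of_pos (hn0 i) _))).symm
      _ = ENNReal.ofReal (ja⁻¹ * ((nn i:ℝ))^β) := by
          congr 1
          rw [mul_inv, Real.rpow_neg (hn0 i).le, inv_inv]
  have hclb : ∀ i, ENNReal.ofReal (jb⁻¹ * ((nn i:ℝ))^β)
      ≤ ENNReal.ofReal ((c (nn i))^2) := by
    intro i
    rw [hcsq _ (hnn i)]
    calc ENNReal.ofReal (jb⁻¹ * ((nn i:ℝ))^β)
        = ENNReal.ofReal ((jb * ((nn i:ℝ))^(-β))⁻¹) := by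
          congr 1
          rw [mul_inv, Real.rpow_neg (hn0 i).le, inv_inv]
      _ = (ENNReal.ofReal (jb * ((nn i:ℝ))^(-β)))⁻¹ :=
          ENNReal.ofReal_inv_of_pos (mul_pos hjb0 (Real.rpow_pos_of_pos (hn0 i) _))
      _ ≤ (Jint d (nn i))⁻¹ := ENNReal.inv_le_inv' (hjb _ (hnn i))
  -- the Y integral
  have hY : ∫⁻ x, ((‖∏ i, Yhw d (c (nn i)) (nn i) x‖₊ : ℝ≥0∞)) ^ 2 ∂(sphMeas d)
      = (∏ i, ENNReal.ofReal ((c (nn i))^2)) * Jint d N := by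
    rw [prod_yhw_lint nn (fun i => c (nn i)), hNdef]
    congr 1
    rw [← Finset.prod_pow, ENNReal.ofReal_prod_of_nonneg (fun i _ => sq_nonneg _)]
  -- J N bounds
  have hNr1 : 1 ≤ N := hN1
  have hNrge : (nn i0:ℝ) ≤ (N:ℝ) := by exact_mod_cast hNge
  have hNrle : (N:ℝ) ≤ (α:ℝ) * (nn i0:ℝ) := by exact_mod_cast hNle
  have hNr0 : (0:ℝ) < (N:ℝ) := lt_of_lt_of_le hn00 hNrge
  have hJub : Jint d N ≤ ENNReal.ofReal (jb * ((nn i0:ℝ))^(-β)) := by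
    refine le_trans (hjb N hN1) (ENNReal.ofReal_le_ofReal ?_)
    exact mul_le_mul_of_nonneg_left (rpow_neg_antitone hn00 hNrge hβ0) hjb0.le
  have hJlb : ENNReal.ofReal (ja * ((α:ℝ) * (nn i0:ℝ))^(-β)) ≤ Jint d N := by
    refine le_trans (ENNReal.ofReal_le_ofReal ?_) (hja N hN1)
    exact mul_le_mul_of_nonneg_left (rpow_neg_antitone hNr0 hNrle hβ0) hja0.le
  -- product bounds
  have hprodub : ∏ i, ENNReal.ofReal ((c (nn i))^2)
      ≤ ENNReal.ofReal (ja⁻¹^α * ((nn i0:ℝ)^β * P^β)) := by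
    calc ∏ i, ENNReal.ofReal ((c (nn i))^2)
        ≤ ∏ i, ENNReal.ofReal (ja⁻¹ * ((nn i:ℝ))^β) :=
          Finset.prod_le_prod' (fun i _ => hcub i)
      _ = ENNReal.ofReal (∏ i, (ja⁻¹ * ((nn i:ℝ))^β)) :=
          (ENNReal.ofReal_prod_of_nonneg (fun i _ => by positivity)).symm
      _ = ENNReal.ofReal (ja⁻¹^α * ((nn i0:ℝ)^β * P^β)) := by
          congr 1
          rw [Finset.prod_mul_distrib, Finset.prod_const, Finset.card_univ,
            Fintype.card_fin, hprod_rpow]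
  have hprodlb : ENNReal.ofReal (jb⁻¹^α * ((nn i0:ℝ)^β * P^β))
      ≤ ∏ i, ENNReal.ofReal ((c (nn i))^2) := by
    calc ENNReal.ofReal (jb⁻¹^α * ((nn i0:ℝ)^β * P^β))
        = ENNReal.ofReal (∏ i, (jb⁻¹ * ((nn i:ℝ))^β)) := by
          congr 1
          rw [Finset.prod_mul_distrib, Finset.prod_const, Finset.card_univ,
            Fintype.card_fin, hprod_rpow]
      _ = ∏ i, ENNReal.ofReal (jb⁻¹ * ((nn i:ℝ))^β) :=
          ENNReal.ofReal_prod_of_nonneg (fun i _ => by positivity)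
      _ ≤ ∏ i, ENNReal.ofReal ((c (nn i))^2) :=
          Finset.prod_le_prod' (fun i _ => hclb i)
  constructor
  · constructor
    · -- Y lower bound
      rw [hY]
      have hreal : P^β / C ≤ jb⁻¹^α * ((nn i0:ℝ)^β * P^β) * (ja * ((α:ℝ) * (nn i0:ℝ))^(-β)) := by
        have hsplit : ((α:ℝ) * (nn i0:ℝ))^(-β) = (α:ℝ)^(-β) * (nn i0:ℝ)^(-β) :=
          Real.mul_rpow hα0.le hn00.le
        have hra : (α:ℝ)^(-β) = ((α:ℝ)^β)⁻¹ := Real.rpow_neg hα0.le β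
        have hrecip : 1/C ≤ jb⁻¹^α * ja * ((α:ℝ)^β)⁻¹ := by
          have heq : jb⁻¹^α * ja * ((α:ℝ)^β)⁻¹ = CL1⁻¹ := by
            rw [hCL1, mul_inv, mul_inv, inv_pow, inv_inv]
          rw [heq, one_div]
          apply inv_anti₀ hCL1pos
          rw [hCdef]; nlinarith
        calc P^β / C = P^β * (1/C) := by ring
          _ ≤ P^β * (jb⁻¹^α * ja * ((α:ℝ)^β)⁻¹) :=
            mul_le_mul_of_nonneg_left hrecip hPβ0
          _ = jb⁻¹^α * ((nn i0:ℝ)^β * P^β) * (ja * ((α:ℝ) * (nn i0:ℝ))^(-β)) := by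
              rw [hsplit, hra]
              linear_combination (-(jb⁻¹^α * ja * (((α:ℝ))^β)⁻¹ * P^β)) * hcancel
      calc ENNReal.ofReal (P^β / C)
          ≤ ENNReal.ofReal (jb⁻¹^α * ((nn i0:ℝ)^β * P^β) * (ja * ((α:ℝ) * (nn i0:ℝ))^(-β))) :=
            ENNReal.ofReal_le_ofReal hreal
        _ = ENNReal.ofReal (jb⁻¹^α * ((nn i0:ℝ)^β * P^β))
              * ENNReal.ofReal (ja * ((α:ℝ) * (nn i0:ℝ))^(-β)) :=
            ENNReal.ofReal_mul (by positivity)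
        _ ≤ (∏ i, ENNReal.ofReal ((c (nn i))^2)) * Jint d N := mul_le_mul' hprodlb hJlb
    · -- Y upper bound
      rw [hY]
      calc (∏ i, ENNReal.ofReal ((c (nn i))^2)) * Jint d N
          ≤ ENNReal.ofReal (ja⁻¹^α * ((nn i0:ℝ)^β * P^β))
              * ENNReal.ofReal (jb * ((nn i0:ℝ))^(-β)) := mul_le_mul' hprodub hJub
        _ = ENNReal.ofReal (ja⁻¹^α * ((nn i0:ℝ)^β * P^β) * (jb * ((nn i0:ℝ))^(-β))) :=
            (ENNReal.ofReal_mul (by positivity)).symm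
        _ ≤ ENNReal.ofReal (C * P^β) := by
            apply ENNReal.ofReal_le_ofReal
            have heq : ja⁻¹^α * ((nn i0:ℝ)^β * P^β) * (jb * ((nn i0:ℝ))^(-β))
                = CU1 * P^β * ((nn i0:ℝ)^β * (nn i0:ℝ)^(-β)) := by
              rw [hCU1]; ring
            rw [heq, hcancel, mul_one]
            apply mul_le_mul_of_nonneg_right ?_ hPβ0
            rw [hCdef]; nlinarith
  · -- the Ytil part
    have hT := ytil_lint (d := d) nn hnn i0 hmax
    constructor
    · rw [hT, hprod_rpow]
      have hreal : P^β / C ≤ (nn i0:ℝ)^β * P^β * (aE * ((nn i0:ℝ))^(-β)) := by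
        have hrecip : 1/C ≤ aE := by
          rw [one_div]
          calc C⁻¹ ≤ (aE⁻¹)⁻¹ := by
                apply inv_anti₀ haEipos
                rw [hCdef]; nlinarith
            _ = aE := inv_inv aE
        calc P^β / C = P^β * (1/C) := by ring
          _ ≤ P^β * aE := mul_le_mul_of_nonneg_left hrecip hPβ0
          _ = (nn i0:ℝ)^β * P^β * (aE * ((nn i0:ℝ))^(-β)) := by
              linear_combination (-(aE * P^β)) * hcancel
      calc ENNReal.ofReal (P^β / C)
          ≤ ENNReal.ofReal ((nn i0:ℝ)^β * P^β * (aE * ((nn i0:ℝ))^(-β))) :=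
            ENNReal.ofReal_le_ofReal hreal
        _ = ENNReal.ofReal ((nn i0:ℝ)^β * P^β) * ENNReal.ofReal (aE * ((nn i0:ℝ))^(-β)) :=
            ENNReal.ofReal_mul (by positivity)
        _ ≤ ENNReal.ofReal ((nn i0:ℝ)^β * P^β) * sphMeas d (Ecap d (nn i0)) :=
            mul_le_mul_right (haE _ (hnn i0)) _
    · rw [hT, hprod_rpow]
      calc ENNReal.ofReal ((nn i0:ℝ)^β * P^β) * sphMeas d (Ecap d (nn i0))
          ≤ ENNReal.ofReal ((nn i0:ℝ)^β * P^β) * ENNReal.ofReal (bE * ((nn i0:ℝ))^(-β)) :=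
            mul_le_mul_right (hbE _ (hnn i0)) _
        _ = ENNReal.ofReal ((nn i0:ℝ)^β * P^β * (bE * ((nn i0:ℝ))^(-β))) :=
            (ENNReal.ofReal_mul (by positivity)).symm
        _ ≤ ENNReal.ofReal (C * P^β) := by
            apply ENNReal.ofReal_le_ofReal
            have heq : (nn i0:ℝ)^β * P^β * (bE * ((nn i0:ℝ))^(-β))
                = bE * P^β * ((nn i0:ℝ)^β * (nn i0:ℝ)^(-β)) := by ring
            rw [heq, hcancel, mul_one]
            apply mul_le_mul_of_nonneg_right ?_ hPβ0
            rw [hCdef]; nlinarith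

end Stmt16

/-- Lemma 18.1, multilinear estimates for highest-weight spherical
harmonics: for decreasing `n₁ ≥ ⋯ ≥ n_α ≥ 1`, the integrals
`∫ |Y_{n₁} ⋯ Y_{n_α}|² dμ_d` and `∫ |Ỹ_{n₁} ⋯ Ỹ_{n_α}|² dμ_d` are both comparable to
`(n₂ ⋯ n_α)^{(d−1)/2}`. -/
theorem stmt16 (d : ℕ) (hd : 2 ≤ d) (c : ℕ → ℝ)
    -- `c n` is the `L²`-normalizing constant of `Y_n`
    (hc : ∀ n : ℕ, 1 ≤ n → 0 < c n ∧
      ∫⁻ x, ((‖Yhw d (c n) n x‖₊ : ℝ≥0∞)) ^ 2 ∂(sphMeas d) = 1) :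
    ∀ α : ℕ, ∀ hα : 2 ≤ α,
      ∃ C : ℝ, 1 ≤ C ∧
        ∀ nn : Fin α → ℕ, (∀ i, 1 ≤ nn i) → (∀ i j : Fin α, i ≤ j → nn j ≤ nn i) →
          (ENNReal.ofReal
              ((∏ i ∈ Finset.univ.erase (⟨0, by omega⟩ : Fin α), (nn i : ℝ)) ^ (((d : ℝ) - 1) / 2) / C)
            ≤ ∫⁻ x, ((‖∏ i, Yhw d (c (nn i)) (nn i) x‖₊ : ℝ≥0∞)) ^ 2 ∂(sphMeas d) ∧
          ∫⁻ x, ((‖∏ i, Yhw d (c (nn i)) (nn i) x‖₊ : ℝ≥0∞)) ^ 2 ∂(sphMeas d)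
            ≤ ENNReal.ofReal
              (C * (∏ i ∈ Finset.univ.erase (⟨0, by omega⟩ : Fin α), (nn i : ℝ)) ^ (((d : ℝ) - 1) / 2)))
          ∧
          (ENNReal.ofReal
              ((∏ i ∈ Finset.univ.erase (⟨0, by omega⟩ : Fin α), (nn i : ℝ)) ^ (((d : ℝ) - 1) / 2) / C)
            ≤ ∫⁻ x, ((‖∏ i, Ytil d (nn i) x‖₊ : ℝ≥0∞)) ^ 2 ∂(sphMeas d) ∧
          ∫⁻ x, ((‖∏ i, Ytil d (nn i) x‖₊ : ℝ≥0∞)) ^ 2 ∂(sphMeas d)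
            ≤ ENNReal.ofReal
              (C * (∏ i ∈ Finset.univ.erase (⟨0, by omega⟩ : Fin α), (nn i : ℝ)) ^ (((d : ℝ) - 1) / 2))) := by
  intro α hα
  obtain ⟨C, hC1, h⟩ := Stmt16.main_aux d hd c hc α hα
  refine ⟨C, hC1, ?_⟩
  intro nn h1 h2
  exact h (⟨0, by omega⟩ : Fin α) (fun j => by simp [Fin.le_def]) nn h1 h2
end
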